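/- arXiv:0912.0428 — 5 statements merged into one kernel-verified Lean document; each statement's English description precedes it below -/
import Mathlib

section
/- Let G(z) = (G₁(z),…,Gₙ(z)) with G_j(z) = λ_j z_j + a_j z^{kα} z_j + b_j z^{2kα} z_j for j = 1,…,n, where α ∈ ℕⁿ, α ≠ 0, k ≥ 1, and λ^α = 1. Then the induced map on the leaf space of the foliation {z^α = const}, i.e., the germ Φ of holomorphic self-map of (ℂ,0) determined by Φ(z^α) = G₁(z)^{α₁}⋯Gₙ(z)^{αₙ}, satisfies Φ(u) = u + Λ(G) u^{k+1} + O(|u|^{k+2}), where Λ(G) = Σ_{j=1}^n a_j α_j / λ_j; moreover Φ is a germ of biholomorphism of (ℂ,0). -/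
open Polynomial Asymptotics

/-- Evaluation at 0 of the derivative of a finite product of polynomials whose values at 0
are nonzero (logarithmic-derivative formula). -/
lemma eval_zero_derivative_prod {ι : Type*} [DecidableEq ι] (s : Finset ι) (q : ι → Polynomial ℂ)
    (hq : ∀ j ∈ s, eval 0 (q j) ≠ 0) :
    eval 0 (derivative (∏ j ∈ s, q j))
      = (∑ j ∈ s, eval 0 (derivative (q j)) / eval 0 (q j)) * ∏ j ∈ s, eval 0 (q j) := by
  classical
  induction s using Finset.induction_on with
  | empty => simp
  | insert c s' hnotmem ih =>
    have hc : eval 0 (q c) ≠ 0 := hq c (Finset.mem_insert_self c s')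
    have hs' : ∀ j ∈ s', eval 0 (q j) ≠ 0 := fun j hj => hq j (Finset.mem_insert_of_mem hj)
    have hP : ∏ j ∈ s', eval 0 (q j) ≠ 0 := Finset.prod_ne_zero_iff.2 hs'
    rw [Finset.prod_insert hnotmem, derivative_mul, eval_add, eval_mul, eval_mul,
      eval_prod, ih hs', Finset.sum_insert hnotmem, Finset.prod_insert hnotmem]
    field_simp

/-- **The induced germ on the leaf space (formula (4.2)).**
Let `G(z) = (G₁(z),…,Gₙ(z))` with `G_j(z) = λ_j z_j + a_j z^{kα} z_j + b_j z^{2kα} z_j`,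
where `α ∈ ℕⁿ`, `α ≠ 0`, `k ≥ 1`, `λ^α = 1`.  Then the induced map on the leaf space of the
foliation `{z^α = const}`, i.e. the germ `Φ` of holomorphic self-map of `(ℂ,0)` determined by
`Φ(z^α) = G₁(z)^{α₁}⋯Gₙ(z)^{αₙ}`, satisfies `Φ(u) = u + Λ(G)u^{k+1} + O(|u|^{k+2})` with
`Λ(G) = Σ_j a_j α_j / λ_j`; moreover `Φ` is a germ of biholomorphism of `(ℂ,0)`. -/
theorem induced_leaf_space_germ
    (n : ℕ) (hn : 0 < n)
    (lam a b : Fin n → ℂ) (hlam : ∀ j, lam j ≠ 0)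
    (α : Fin n → ℕ) (hα : α ≠ 0)
    (k : ℕ) (hk : 1 ≤ k)
    (hres : ∏ i, lam i ^ α i = 1)
    (G : (Fin n → ℂ) → (Fin n → ℂ))
    (hG : G = fun z j => lam j * z j + a j * (∏ i, z i ^ α i) ^ k * z j
        + b j * (∏ i, z i ^ α i) ^ (2 * k) * z j)
    (Φ : ℂ → ℂ)
    (hΦ : Φ = fun u => u * ∏ j, (lam j + a j * u ^ k + b j * u ^ (2 * k)) ^ α j) :
    (∀ z : Fin n → ℂ, ∏ j, (G z j) ^ α j = Φ (∏ j, z j ^ α j))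
    ∧ ((fun u : ℂ => Φ u - (u + (∑ j, a j * (α j : ℂ) / lam j) * u ^ (k + 1)))
        =O[nhds 0] fun u : ℂ => ‖u‖ ^ (k + 2))
    ∧ (AnalyticAt ℂ Φ 0 ∧ Φ 0 = 0 ∧
        ∃ s ∈ nhds (0 : ℂ), Set.InjOn Φ s ∧ Φ '' s ∈ nhds (0 : ℂ)) := by
  have hk0 : k ≠ 0 := by omega
  set Λ : ℂ := ∑ j, a j * (α j : ℂ) / lam j with hΛ
  -- the polynomial `P(t) = ∏ (λ_j + a_j t + b_j t²)^{α_j}` in the variable `t = u^k`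
  set p : Fin n → Polynomial ℂ := fun j => C (lam j) + C (a j) * X + C (b j) * X ^ 2 with hp
  set P : Polynomial ℂ := ∏ j, (p j) ^ α j with hP
  have hpev : ∀ j, eval 0 (p j) = lam j := by intro j; simp [hp]
  have hqev : ∀ j, eval 0 ((p j) ^ α j) = lam j ^ α j := by intro j; simp [hpev]
  have hPev : eval 0 P = 1 := by
    rw [hP, eval_prod]; simpa [hqev] using hres
  have hpdev : ∀ j, eval 0 (derivative (p j)) = a j := by
    intro j; simp [hp]
  -- the derivative of `P` at 0 equals `Λ`
  have hPdev : eval 0 (derivative P) = Λ := by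
    rw [hP, eval_zero_derivative_prod _ _ (fun j _ => by simpa [hqev] using pow_ne_zero (α j) (hlam j))]
    have hterm : ∀ j : Fin n,
        eval 0 (derivative ((p j) ^ α j)) / eval 0 ((p j) ^ α j) = a j * (α j : ℂ) / lam j := by
      intro j
      rcases Nat.eq_zero_or_pos (α j) with h0 | hpos
      · simp [h0]
      · rw [derivative_pow, eval_mul, eval_mul, eval_C, hpdev, hqev, eval_pow, hpev]
        have : lam j ^ α j = lam j ^ (α j - 1) * lam j := by
          conv_lhs => rw [show α j = (α j - 1) + 1 by omega]
          rw [pow_succ]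
        rw [this]
        have h1 : lam j ^ (α j - 1) ≠ 0 := pow_ne_zero _ (hlam j)
        rw [div_eq_div_iff (mul_ne_zero h1 (hlam j)) (hlam j)]
        ring
    rw [Finset.prod_congr rfl fun j _ => hqev j, hres, mul_one,
      Finset.sum_congr rfl fun j _ => hterm j]
  -- `Φ u = u * P(u^k)`
  have hΦP : ∀ u : ℂ, Φ u = u * eval (u ^ k) P := by
    intro u
    rw [hΦ]
    beta_reduce
    rw [hP, eval_prod]
    congr 1
    refine Finset.prod_congr rfl fun j _ => ?_
    rw [hp]
    simp [pow_mul']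
  -- the remainder polynomial `R := P - 1 - Λ X` is divisible by `X²`
  have hdvd : X ^ 2 ∣ P - 1 - C Λ * X := by
    rw [X_pow_dvd_iff]
    intro d hd
    interval_cases d
    · simp [coeff_zero_eq_eval_zero, hPev]
    · have h1 : P.coeff 1 = Λ := by
        have := coeff_derivative P 0
        rw [coeff_zero_eq_eval_zero, hPdev] at this
        simpa using this.symm
      simp [h1, coeff_one]
  obtain ⟨Q, hQ⟩ := hdvd
  -- explicit remainder formula
  have hrem : ∀ u : ℂ, Φ u - (u + Λ * u ^ (k + 1))
      = u ^ (k + 2) * (u ^ (k - 1) * eval (u ^ k) Q) := by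
    intro u
    have h1 : eval (u ^ k) P - 1 - Λ * u ^ k = (u ^ k) ^ 2 * eval (u ^ k) Q := by
      have := congrArg (eval (u ^ k)) hQ
      simpa using this
    have h2 : Φ u - (u + Λ * u ^ (k + 1)) = u * (eval (u ^ k) P - 1 - Λ * u ^ k) := by
      rw [hΦP]; ring
    rw [h2, h1]
    calc u * ((u ^ k) ^ 2 * eval (u ^ k) Q)
        = u ^ (k * 2) * u * eval (u ^ k) Q := by rw [← pow_mul]; ring
      _ = u ^ (k * 2 + 1) * eval (u ^ k) Q := by rw [pow_succ]
      _ = u ^ ((k + 2) + (k - 1)) * eval (u ^ k) Q := by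
            rw [show k * 2 + 1 = (k + 2) + (k - 1) from by omega]
      _ = u ^ (k + 2) * (u ^ (k - 1) * eval (u ^ k) Q) := by rw [pow_add]; ring
  refine ⟨?_, ?_, ?_, ?_, ?_⟩
  -- (1) the semiconjugacy identity
  · intro z
    rw [hG, hΦ]
    simp only
    rw [← Finset.prod_mul_distrib]
    refine Finset.prod_congr rfl fun j _ => ?_
    rw [← mul_pow]
    ring_nf
  -- (2) the asymptotic expansion
  · have hO1 : (fun u : ℂ => u ^ (k + 2)) =O[nhds 0] fun u : ℂ => ‖u‖ ^ (k + 2) := by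
      apply isBigO_of_le
      intro u
      simp [norm_pow]
    have hO2 : (fun u : ℂ => u ^ (k - 1) * eval (u ^ k) Q) =O[nhds 0] fun _ : ℂ => (1 : ℝ) := by
      apply Filter.Tendsto.isBigO_one
      exact (Continuous.tendsto ((continuous_pow (k - 1)).mul
        (Q.continuous.comp (continuous_pow k))) 0)
    have := hO1.mul hO2
    simp only [mul_one] at this
    refine this.congr' ?_ (by simp)
    filter_upwards with u
    rw [hrem u]
  -- (3) analyticity
  · rw [hΦ]
    exact (analyticAt_id.fun_mul (Finset.analyticAt_fun_prod _ fun j _ =>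
      ((analyticAt_const.fun_add (analyticAt_const.fun_mul (analyticAt_id.fun_pow k))).fun_add
        (analyticAt_const.fun_mul (analyticAt_id.fun_pow (2 * k)))).fun_pow (α j)))
  -- (4) Φ 0 = 0
  · rw [hΦ]; simp
  -- (5) local injectivity with open image
  · -- Φ has strict derivative 1 at 0
    set pfull : Polynomial ℂ :=
      X * ∏ j, (C (lam j) + C (a j) * X ^ k + C (b j) * X ^ (2 * k)) ^ α j with hpfull
    have hΦeval : Φ = fun u => eval u pfull := by
      funext u
      rw [hΦ, hpfull]
      simp [eval_prod]
    have hpder : eval 0 (derivative pfull) = 1 := by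
      rw [hpfull, derivative_mul, eval_add, eval_mul, eval_mul, derivative_X, eval_one,
        eval_X, one_mul, zero_mul, add_zero, eval_prod]
      calc ∏ j, eval 0 ((C (lam j) + C (a j) * X ^ k + C (b j) * X ^ (2 * k)) ^ α j)
          = ∏ j, lam j ^ α j := by
            refine Finset.prod_congr rfl fun j _ => ?_
            simp [zero_pow hk0, zero_pow (by positivity : 2 * k ≠ 0)]
        _ = 1 := hres
    have hstrict : HasStrictDerivAt Φ 1 0 := by
      rw [hΦeval]
      have := pfull.hasStrictDerivAt 0
      rwa [hpder] at this
    have hstrictF : HasStrictFDerivAt Φ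
        ((ContinuousLinearEquiv.refl ℂ ℂ : ℂ ≃L[ℂ] ℂ) : ℂ →L[ℂ] ℂ) 0 := by
      have : ((ContinuousLinearEquiv.refl ℂ ℂ : ℂ ≃L[ℂ] ℂ) : ℂ →L[ℂ] ℂ)
          = (1 : ℂ →L[ℂ] ℂ).smulRight (1 : ℂ) := by
        ext; simp [smul_eq_mul]
      rw [this]
      exact hstrict
    set e := hstrictF.toOpenPartialHomeomorph Φ with he
    have hΦ0 : Φ 0 = 0 := by rw [hΦ]; simp
    refine ⟨e.source, ?_, ?_, ?_⟩
    · exact e.open_source.mem_nhds hstrictF.mem_toOpenPartialHomeomorph_source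
    · have hcoe : ⇑e = Φ := hstrictF.toOpenPartialHomeomorph_coe
      rw [← hcoe]
      exact e.injOn
    · have hcoe : ⇑e = Φ := hstrictF.toOpenPartialHomeomorph_coe
      have himg : Φ '' e.source = e.target := by rw [← hcoe]; exact e.image_source_eq_target
      rw [himg]
      refine e.open_target.mem_nhds ?_
      have : e 0 ∈ e.target := e.map_source hstrictF.mem_toOpenPartialHomeomorph_source
      rwa [hcoe, hΦ0] at this
end

section
/- Let F ∈ Diff(ℂⁿ;0) with eigenvalues λ₁,…,λₙ of dF₀. Suppose λ₁^q = 1 for some positive integer q, λ₁^l ≠ 1 for l = 1,…,q−1, and |λ_j| < 1 for j = 2,…,n. Let k be the order of F with respect to λ₁. Then k = ∞ (equivalently, F is formally linearizable in the first component) if and only if there exists a germ at 0 of a holomorphic non-singular curve, passing through 0, consisting of fixed points of F^{∘q}. -/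
open Filter

open Asymptotics Topology Metric

namespace SemiAttrAux

variable {E F : Type*} [NormedAddCommGroup E] [NormedSpace ℂ E]
  [NormedAddCommGroup F] [NormedSpace ℂ F]

lemma iterate_fixed {f : E → E} (h0 : f 0 = 0) (m : ℕ) : f^[m] 0 = 0 := by
  induction m with
  | zero => simp
  | succ m ih => rw [Function.iterate_succ_apply', ih, h0]

lemma iterate_analyticAt {f : E → E} (hf : AnalyticAt ℂ f 0) (h0 : f 0 = 0) (m : ℕ) :
    AnalyticAt ℂ (f^[m]) 0 := by
  induction m with
  | zero =>
    have : AnalyticAt ℂ (id : E → E) 0 := analyticAt_id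
    simpa using this
  | succ m ih =>
    rw [Function.iterate_succ']
    have h1 : AnalyticAt ℂ f (f^[m] 0) := by rw [iterate_fixed h0]; exact hf
    exact h1.comp ih

lemma isBigO_norm_of_fixed {f : E → F} (hf : AnalyticAt ℂ f 0) (h0 : f 0 = 0) :
    f =O[𝓝 0] fun z : E => ‖z‖ := by
  have h := hf.differentiableAt.isBigO_sub
  simp only [h0, sub_zero] at h
  exact h.norm_right

lemma isBigO_sub_linear {f : E → F} (hf : AnalyticAt ℂ f 0) (h0 : f 0 = 0)
    {L : E →L[ℂ] F} (hd : HasFDerivAt f L 0) :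
    (fun z => f z - L z) =O[𝓝 0] fun z : E => ‖z‖ ^ 2 := by
  obtain ⟨p, hp⟩ := hf
  have h2 := hp.isBigO_sub_partialSum_pow 2
  simp only [zero_add] at h2
  have hps : ∀ y, p.partialSum 2 y = L y := by
    intro y
    have c0 : p 0 (fun _ => y) = f 0 := hp.coeff_zero _
    have c1 : (continuousMultilinearCurryFin1 ℂ E F) (p 1) = L := by
      have h3 := hp.fderiv_eq
      rw [hd.fderiv] at h3
      exact h3.symm
    have c1' : p 1 (fun _ => y) = L y := by
      rw [← c1]
      simp only [continuousMultilinearCurryFin1_apply]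
      congr 1
    simp [FormalMultilinearSeries.partialSum, Finset.sum_range_succ, c0, h0, c1']
  refine h2.congr' ?_ EventuallyEq.rfl
  filter_upwards with y
  rw [hps]

lemma eventually_zero_of_forall_isBigO {g : ℂ → ℂ} (hg : AnalyticAt ℂ g 0)
    (h : ∀ T : ℕ, g =O[𝓝 0] fun ζ : ℂ => ‖ζ‖ ^ T) : ∀ᶠ ζ in 𝓝 (0:ℂ), g ζ = 0 := by
  by_cases horder : analyticOrderAt g 0 = ⊤
  · exact analyticOrderAt_eq_top.1 horder
  · lift analyticOrderAt g 0 to ℕ using horder with m hm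
    obtain ⟨h₁, h₁a, h₁0, heq⟩ := hg.analyticOrderAt_eq_natCast.1 hm.symm
    exfalso
    obtain ⟨C, hC⟩ := ((h (m+1)).bound)
    have hlim : Tendsto (fun ζ : ℂ => ‖h₁ ζ‖) (𝓝[≠] 0) (𝓝 ‖h₁ 0‖) :=
      ((h₁a.continuousAt.norm).continuousWithinAt).tendsto
    have hbound : ∀ᶠ ζ in 𝓝[≠] (0:ℂ), ‖h₁ ζ‖ ≤ C * ‖ζ‖ := by
      filter_upwards [nhdsWithin_le_nhds heq, nhdsWithin_le_nhds hC,
        self_mem_nhdsWithin] with ζ h1 h2 h3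
      have hz : ζ ≠ 0 := h3
      rw [h1] at h2
      rw [Real.norm_of_nonneg (by positivity)] at h2
      simp only [sub_zero, smul_eq_mul, norm_mul, norm_pow] at h2
      have hzp : 0 < ‖ζ‖ ^ m := pow_pos (norm_pos_iff.mpr hz) m
      have h2' : ‖ζ‖ ^ m * ‖h₁ ζ‖ ≤ ‖ζ‖ ^ m * (C * ‖ζ‖) := by
        calc ‖ζ‖ ^ m * ‖h₁ ζ‖ ≤ C * ‖ζ‖ ^ (m + 1) := h2
          _ = ‖ζ‖ ^ m * (C * ‖ζ‖) := by ring
      exact (mul_le_mul_iff_right₀ hzp).mp h2'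
    have h0le : ‖h₁ 0‖ ≤ 0 := by
      have hlim2 : Tendsto (fun ζ : ℂ => C * ‖ζ‖) (𝓝[≠] 0) (𝓝 (C * ‖(0:ℂ)‖)) := by
        apply Tendsto.const_mul
        exact (continuous_norm.continuousWithinAt).tendsto
      simp only [norm_zero, mul_zero] at hlim2
      exact le_of_tendsto_of_tendsto hlim hlim2 hbound
    exact h₁0 (norm_le_zero_iff.1 h0le)


lemma poly_small : ∀ (s : ℕ) (a : ℕ → F) (C : ℝ),
    (∀ᶠ c in 𝓝[≠] (0:ℂ), ‖∑ i ∈ Finset.range s, c ^ i • a i‖ ≤ C * ‖c‖ ^ s) →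
    ∀ i < s, a i = 0 := by
  intro s
  induction s with
  | zero => intro a C h i hi; exact absurd hi (Nat.not_lt_zero i)
  | succ s ih =>
    intro a C h
    have ha0 : a 0 = 0 := by
      have hlim : Tendsto (fun c : ℂ => ∑ i ∈ Finset.range (s+1), c ^ i • a i) (𝓝[≠] 0)
          (𝓝 (∑ i ∈ Finset.range (s+1), (0:ℂ) ^ i • a i)) := by
        apply Tendsto.mono_left ?_ nhdsWithin_le_nhds
        exact Continuous.tendsto (continuous_finset_sum _ fun i _ =>
          (continuous_pow i).smul continuous_const) 0
      have hval : (∑ i ∈ Finset.range (s+1), (0:ℂ) ^ i • a i) = a 0 := by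
        rw [Finset.sum_range_succ']
        simp
      rw [hval] at hlim
      have hlim2 : Tendsto (fun c : ℂ => C * ‖c‖ ^ (s+1)) (𝓝[≠] 0) (𝓝 0) := by
        apply Tendsto.mono_left ?_ nhdsWithin_le_nhds
        have : Tendsto (fun c : ℂ => C * ‖c‖ ^ (s+1)) (𝓝 0) (𝓝 (C * ‖(0:ℂ)‖ ^ (s+1))) :=
          Continuous.tendsto (continuous_const.mul (continuous_norm.pow _)) 0
        simpa using this
      have : ‖a 0‖ ≤ 0 := le_of_tendsto_of_tendsto (hlim.norm) hlim2 h
      simpa using norm_le_zero_iff.1 this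
    have hb : ∀ᶠ c in 𝓝[≠] (0:ℂ), ‖∑ i ∈ Finset.range s, c ^ i • a (i+1)‖ ≤ C * ‖c‖ ^ s := by
      filter_upwards [h, self_mem_nhdsWithin] with c hc hc0
      have hcz : (0:ℝ) < ‖c‖ := norm_pos_iff.mpr hc0
      have hsum : ∑ i ∈ Finset.range (s+1), c ^ i • a i
          = c • ∑ i ∈ Finset.range s, c ^ i • a (i+1) := by
        rw [Finset.sum_range_succ', ha0, Finset.smul_sum]
        simp only [smul_zero, add_zero, pow_zero]
        apply Finset.sum_congr rfl
        intro i _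
        rw [smul_smul, pow_succ, mul_comm]
      rw [hsum, norm_smul] at hc
      have : ‖c‖ * ‖∑ i ∈ Finset.range s, c ^ i • a (i+1)‖ ≤ ‖c‖ * (C * ‖c‖ ^ s) := by
        calc ‖c‖ * ‖∑ i ∈ Finset.range s, c ^ i • a (i+1)‖ ≤ C * ‖c‖ ^ (s+1) := hc
          _ = ‖c‖ * (C * ‖c‖ ^ s) := by ring
      exact (mul_le_mul_iff_right₀ hcz).mp this
    intro i hi
    match i with
    | 0 => exact ha0
    | (j+1) => exact ih (fun i => a (i+1)) C hb j (by omega)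

lemma coeffs_vanish_of_isBigO {f : E → F} {p : FormalMultilinearSeries ℂ E F}
    (hp : HasFPowerSeriesAt f p 0) {s : ℕ} (h : f =O[𝓝 0] fun z : E => ‖z‖ ^ s) :
    ∀ m, m < s → ∀ z : E, p m (fun _ => z) = 0 := by
  have key : ∀ z : E, ∀ m, m < s → p m (fun _ => z) = 0 := by
    intro z
    have hφ : Tendsto (fun c : ℂ => c • z) (𝓝[≠] 0) (𝓝 (0:E)) := by
      apply Tendsto.mono_left ?_ nhdsWithin_le_nhds
      have : Tendsto (fun c : ℂ => c • z) (𝓝 0) (𝓝 ((0:ℂ) • z)) :=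
        Continuous.tendsto (continuous_id.smul continuous_const) 0
      simpa using this
    have h1 : (fun c : ℂ => f (c • z)) =O[𝓝[≠] (0:ℂ)] fun c => ‖c‖ ^ s := by
      have := h.comp_tendsto hφ
      refine this.trans (IsBigO.of_bound (‖z‖ ^ s) ?_)
      filter_upwards with c
      simp only [Function.comp_apply, norm_smul, norm_norm, norm_pow, mul_pow]
      rw [Real.norm_of_nonneg (by positivity)]
      ring_nf
      exact le_refl _
    have h2 : (fun c : ℂ => f (c • z) - p.partialSum s (c • z)) =O[𝓝[≠] (0:ℂ)]
        fun c => ‖c‖ ^ s := by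
      have ht := hp.isBigO_sub_partialSum_pow s
      simp only [zero_add] at ht
      have := ht.comp_tendsto hφ
      refine this.trans (IsBigO.of_bound (‖z‖ ^ s) ?_)
      filter_upwards with c
      simp only [Function.comp_apply, norm_smul, norm_norm, norm_pow, mul_pow]
      rw [Real.norm_of_nonneg (by positivity)]
      ring_nf
      exact le_refl _
    have h3 : (fun c : ℂ => ∑ i ∈ Finset.range s, c ^ i • (p i fun _ => z))
        =O[𝓝[≠] (0:ℂ)] fun c => ‖c‖ ^ s := by
      have heq : ∀ c : ℂ, ∑ i ∈ Finset.range s, c ^ i • (p i fun _ => z)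
          = f (c • z) - (f (c • z) - p.partialSum s (c • z)) := by
        intro c
        rw [sub_sub_cancel]
        unfold FormalMultilinearSeries.partialSum
        apply Finset.sum_congr rfl
        intro i _
        have := (p i).map_smul_univ (fun _ => c) (fun _ => z)
        simp only [Finset.prod_const, Finset.card_univ, Fintype.card_fin] at this
        exact this.symm
      have heq2 : (fun c : ℂ => ∑ i ∈ Finset.range s, c ^ i • (p i fun _ => z))
          = fun c : ℂ => f (c • z) - (f (c • z) - p.partialSum s (c • z)) := funext heq
      rw [heq2]
      exact h1.sub h2
    obtain ⟨C, hC⟩ := h3.bound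
    have hC' : ∀ᶠ c in 𝓝[≠] (0:ℂ),
        ‖∑ i ∈ Finset.range s, c ^ i • (p i fun _ => z)‖ ≤ C * ‖c‖ ^ s := by
      filter_upwards [hC] with c hc
      calc ‖∑ i ∈ Finset.range s, c ^ i • (p i fun _ => z)‖
          ≤ C * ‖‖c‖ ^ s‖ := hc
        _ = C * ‖c‖ ^ s := by rw [Real.norm_of_nonneg (by positivity)]
    exact fun m hm => poly_small s (fun i => p i fun _ => z) C hC' m hm
  exact fun m hm z => key z m hm


lemma norm_prod_sub_prod_le {ι : Type*} [DecidableEq ι] (t : Finset ι) (a b : ι → ℂ) (M : ℝ)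
    (hM : 0 ≤ M) (ha : ∀ i ∈ t, ‖a i‖ ≤ M) (hb : ∀ i ∈ t, ‖b i‖ ≤ M) :
    ‖∏ i ∈ t, a i - ∏ i ∈ t, b i‖ ≤ (∑ i ∈ t, ‖a i - b i‖) * M ^ (t.card - 1) := by
  induction t using Finset.induction with
  | empty => simp
  | insert i t hi ih =>
    have ha' : ∀ j ∈ t, ‖a j‖ ≤ M := fun j hj => ha j (Finset.mem_insert_of_mem hj)
    have hb' : ∀ j ∈ t, ‖b j‖ ≤ M := fun j hj => hb j (Finset.mem_insert_of_mem hj)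
    have hprodb : ‖∏ j ∈ t, a j‖ ≤ M ^ t.card := by
      rw [norm_prod]
      calc ∏ j ∈ t, ‖a j‖ ≤ ∏ j ∈ t, M :=
        Finset.prod_le_prod (fun j _ => norm_nonneg _) (fun j hj => ha' j hj)
        _ = M ^ t.card := by rw [Finset.prod_const]
    rw [Finset.prod_insert hi, Finset.prod_insert hi, Finset.sum_insert hi]
    have hsplit : a i * ∏ j ∈ t, a j - b i * ∏ j ∈ t, b j
        = (a i - b i) * ∏ j ∈ t, a j + b i * (∏ j ∈ t, a j - ∏ j ∈ t, b j) := by ring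
    rw [hsplit]
    have hcard : (insert i t).card - 1 = t.card := by
      rw [Finset.card_insert_of_notMem hi]; omega
    rw [hcard]
    calc ‖(a i - b i) * ∏ j ∈ t, a j + b i * (∏ j ∈ t, a j - ∏ j ∈ t, b j)‖
        ≤ ‖(a i - b i) * ∏ j ∈ t, a j‖ + ‖b i * (∏ j ∈ t, a j - ∏ j ∈ t, b j)‖ :=
          norm_add_le _ _
      _ ≤ ‖a i - b i‖ * M ^ t.card
          + M * ((∑ j ∈ t, ‖a j - b j‖) * M ^ (t.card - 1)) := by
          gcongr
          · rw [norm_mul]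
            exact mul_le_mul_of_nonneg_left hprodb (norm_nonneg _)
          · rw [norm_mul]
            exact mul_le_mul (hb i (Finset.mem_insert_self i t)) (ih ha' hb')
              (norm_nonneg _) hM
      _ ≤ ‖a i - b i‖ * M ^ t.card + (∑ j ∈ t, ‖a j - b j‖) * M ^ t.card := by
          refine add_le_add (le_refl _) ?_
          rcases t.eq_empty_or_nonempty with h | h
          · simp [h]
          · have hc : 1 ≤ t.card := Finset.Nonempty.card_pos h
            have hMM : M * M ^ (t.card - 1) = M ^ t.card := by
              conv_rhs => rw [show t.card = (t.card - 1) + 1 by omega]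
              rw [pow_succ]
              ring
            refine le_of_eq ?_
            calc M * ((∑ j ∈ t, ‖a j - b j‖) * M ^ (t.card - 1))
                = (∑ j ∈ t, ‖a j - b j‖) * (M * M ^ (t.card - 1)) := by ring
              _ = (∑ j ∈ t, ‖a j - b j‖) * M ^ t.card := by rw [hMM]
      _ = (‖a i - b i‖ + ∑ j ∈ t, ‖a j - b j‖) * M ^ t.card := by ring

lemma lipschitz_small [CompleteSpace F] {σ : E → F} (hσ : AnalyticAt ℂ σ 0)
    (hO : σ =O[𝓝 0] fun z : E => ‖z‖ ^ 2) {ε : ℝ} (hε : 0 < ε) :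
    ∃ ρ > 0, ∀ a ∈ ball (0:E) ρ, ∀ b ∈ ball (0:E) ρ, ‖σ a - σ b‖ ≤ ε * ‖a - b‖ := by
  have hσ0 : σ 0 = 0 := by
    obtain ⟨C, hC⟩ := hO.bound
    have := hC.self_of_nhds
    simpa using this
  have hlittle : (fun z : E => σ ((0:E) + z) - σ 0 - (0 : E →L[ℂ] F) z) =o[𝓝 0] fun z => z := by
    simp only [hσ0, sub_zero, ContinuousLinearMap.zero_apply, zero_add]
    have h1 : (fun z : E => ‖z‖ ^ 2) =o[𝓝 0] fun z : E => z := by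
      rw [isLittleO_iff]
      intro c hc
      filter_upwards [Metric.ball_mem_nhds (0:E) hc] with z hz
      rw [mem_ball, dist_zero_right] at hz
      have : ‖z‖ ^ 2 = ‖z‖ * ‖z‖ := by ring
      rw [Real.norm_of_nonneg (by positivity), this]
      exact mul_le_mul_of_nonneg_right (le_of_lt hz) (norm_nonneg _)
    exact hO.trans_isLittleO h1
  have hd : HasFDerivAt σ (0 : E →L[ℂ] F) 0 := hasFDerivAt_iff_isLittleO_nhds_zero.2 hlittle
  have hfd0 : fderiv ℂ σ 0 = 0 := hd.fderiv
  have hfda : AnalyticAt ℂ (fderiv ℂ σ) 0 := hσ.fderiv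
  have hcont : Tendsto (fun z => ‖fderiv ℂ σ z‖) (𝓝 0) (𝓝 0) := by
    simpa only [hfd0, norm_zero] using (hfda.continuousAt.norm).tendsto
  have hev : ∀ᶠ z in 𝓝 (0:E), ‖fderiv ℂ σ z‖ ≤ ε ∧ AnalyticAt ℂ σ z := by
    filter_upwards [hcont.eventually (eventually_le_nhds hε), hσ.eventually_analyticAt]
      with z h1 h2
    exact ⟨h1, h2⟩
  obtain ⟨ρ, hρ, hball⟩ := Metric.eventually_nhds_iff_ball.1 hev
  refine ⟨ρ, hρ, fun a ha b hb => ?_⟩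
  have hconv : Convex ℝ (ball (0:E) ρ) := convex_ball _ _
  have := hconv.norm_image_sub_le_of_norm_hasFDerivWithin_le
    (f := σ) (f' := fun x => (fderiv ℂ σ x).restrictScalars ℝ) (C := ε) ?_ ?_ hb ha
  · exact this
  · intro x hx
    exact (((hball x hx).2.differentiableAt.hasFDerivAt).restrictScalars ℝ).hasFDerivWithinAt
  · intro x hx
    rw [ContinuousLinearMap.norm_restrictScalars]
    exact (hball x hx).1

lemma local_inverse [CompleteSpace E] {f : E → E} {A : E ≃L[ℂ] E} (hf : AnalyticAt ℂ f 0)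
    (h0 : f 0 = 0) (hd : HasFDerivAt f (A : E →L[ℂ] E) 0) :
    ∃ σ : E → E, AnalyticAt ℂ σ 0 ∧ σ 0 = 0 ∧ (∀ᶠ z in 𝓝 (0:E), σ (f z) = z) ∧
      (∀ᶠ w in 𝓝 (0:E), f (σ w) = w) := by
  have hstrict : HasStrictFDerivAt f (A : E →L[ℂ] E) 0 := by
    have h := hf.hasStrictFDerivAt
    rwa [hd.fderiv] at h
  set ph := hstrict.toOpenPartialHomeomorph f with hph
  have hsource : (0:E) ∈ ph.source := hstrict.mem_toOpenPartialHomeomorph_source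
  have hcoe : ⇑ph = f := hstrict.toOpenPartialHomeomorph_coe
  obtain ⟨p, hp⟩ := hf
  have hp' : HasFPowerSeriesAt (⇑ph) p 0 := by rwa [hcoe]
  have hp1 : p 1 = (continuousMultilinearCurryFin1 ℂ E E).symm (A : E →L[ℂ] E) := by
    have h1 := hp.fderiv_eq
    rw [hd.fderiv] at h1
    rw [h1]
    exact (LinearIsometryEquiv.symm_apply_apply _ _).symm
  have hsymm := ph.hasFPowerSeriesAt_symm hsource hp' hp1
  rw [hcoe, h0] at hsymm
  refine ⟨⇑ph.symm, ⟨_, hsymm⟩, ?_, ?_, ?_⟩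
  · have h2 := ph.left_inv hsource
    rw [show (ph : E → E) 0 = 0 from by rw [hcoe, h0]] at h2
    exact h2
  · filter_upwards [ph.open_source.mem_nhds hsource] with z hz
    have := ph.left_inv hz
    rwa [hcoe] at this
  · have htarget : (0:E) ∈ ph.target := by
      have := ph.map_source hsource
      rwa [hcoe, h0] at this
    filter_upwards [ph.open_target.mem_nhds htarget] with w hw
    have := ph.right_inv hw
    rwa [hcoe] at this


section FinDim

variable {n : ℕ}

noncomputable def diagCLM (μ : Fin n → ℂ) : (Fin n → ℂ) →L[ℂ] (Fin n → ℂ) :=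
  ContinuousLinearMap.pi (fun j => μ j • ContinuousLinearMap.proj j)

@[simp] lemma diagCLM_apply (μ : Fin n → ℂ) (z : Fin n → ℂ) (j : Fin n) :
    diagCLM μ z j = μ j * z j := rfl

lemma pi_decomp (z : Fin n → ℂ) : ∑ j, z j • (Pi.single j 1 : Fin n → ℂ) = z := by
  funext k
  rw [Finset.sum_apply]
  simp only [Pi.smul_apply, Pi.single_apply, smul_eq_mul, mul_ite, mul_one, mul_zero]
  simp

lemma monomial_analytic {s : ℕ} (α : Fin s → Fin n) (x : Fin n → ℂ) :
    AnalyticAt ℂ (fun z : Fin n → ℂ => ∏ i, z (α i)) x := by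
  apply Finset.analyticAt_fun_prod
  intro i _
  exact (ContinuousLinearMap.proj (R := ℂ) (φ := fun _ : Fin n => ℂ) (α i)).analyticAt x

lemma monomial_bound {s : ℕ} (α : Fin s → Fin n) (z : Fin n → ℂ) :
    ‖∏ i, z (α i)‖ ≤ ‖z‖ ^ s := by
  rw [norm_prod]
  calc ∏ i, ‖z (α i)‖ ≤ ∏ _i : Fin s, ‖z‖ :=
        Finset.prod_le_prod (fun i _ => norm_nonneg _) (fun i _ => norm_le_pi_norm z (α i))
    _ = ‖z‖ ^ s := by simp [Finset.prod_const]

lemma cmm_expansion {s : ℕ} (Q : ContinuousMultilinearMap ℂ (fun _ : Fin s => (Fin n → ℂ)) ℂ)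
    (z : Fin n → ℂ) :
    (Q fun _ => z) = ∑ α : Fin s → Fin n, (∏ i, z (α i)) • (Q fun i => (Pi.single (α i) 1 : Fin n → ℂ)) := by
  have hz : (fun _ : Fin s => z) = fun _ : Fin s => ∑ j, z j • (Pi.single j 1 : Fin n → ℂ) := by
    funext i; rw [pi_decomp]
  rw [hz]
  have h := Q.toMultilinearMap.map_sum
    (g := fun (_ : Fin s) (j : Fin n) => z j • (Pi.single j 1 : Fin n → ℂ))
  simp only [ContinuousMultilinearMap.coe_coe] at h
  rw [h]
  apply Finset.sum_congr rfl
  intro α _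
  exact Q.map_smul_univ (fun i => z (α i)) (fun i => (Pi.single (α i) 1 : Fin n → ℂ))

lemma homological_step (e : Fin n) (ν : Fin n → ℂ) (hνe : ν e = 1)
    (hν : ∀ j, j ≠ e → ‖ν j‖ < 1) {s : ℕ} (hs : 1 ≤ s)
    (Q : ContinuousMultilinearMap ℂ (fun _ : Fin s => (Fin n → ℂ)) ℂ)
    (hres : (Q fun _ => (Pi.single e 1 : Fin n → ℂ)) = 0) :
    ∃ P : (Fin n → ℂ) → ℂ, (∀ x, AnalyticAt ℂ P x) ∧ P 0 = 0 ∧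
      (∃ K, 0 ≤ K ∧ ∀ z, ‖P z‖ ≤ K * ‖z‖ ^ s) ∧
      (∀ z, P (diagCLM ν z) - P z = -(Q fun _ => z)) ∧
      (∃ K, 0 ≤ K ∧ ∀ a b : Fin n → ℂ,
        ‖P a - P b‖ ≤ K * (max ‖a‖ ‖b‖) ^ (s - 1) * ‖a - b‖) := by
  classical
  set cc : (Fin s → Fin n) → ℂ := fun α => Q fun i => (Pi.single (α i) 1 : Fin n → ℂ) with hcc
  set dd : (Fin s → Fin n) → ℂ := fun α => (∏ i, ν (α i)) - 1 with hdd
  have habs : ∀ α : Fin s → Fin n, α ≠ (fun _ => e) → ‖∏ i, ν (α i)‖ < 1 := by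
    intro α hα
    have : ∃ i₀, α i₀ ≠ e := by
      by_contra hco
      push_neg at hco
      exact hα (funext hco)
    obtain ⟨i₀, hi₀⟩ := this
    have hle1 : ∀ j : Fin n, ‖ν j‖ ≤ 1 := by
      intro j
      by_cases hj : j = e
      · rw [hj, hνe]; simp
      · exact le_of_lt (hν j hj)
    rw [norm_prod]
    rw [← Finset.mul_prod_erase Finset.univ _ (Finset.mem_univ i₀)]
    have h1 : ∏ i ∈ Finset.univ.erase i₀, ‖ν (α i)‖ ≤ 1 :=
      Finset.prod_le_one (fun i _ => (norm_nonneg _)) (fun i _ => hle1 (α i))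
    calc ‖ν (α i₀)‖ * ∏ i ∈ Finset.univ.erase i₀, ‖ν (α i)‖
        ≤ ‖ν (α i₀)‖ * 1 :=
          mul_le_mul_of_nonneg_left h1 (norm_nonneg _)
      _ = ‖ν (α i₀)‖ := mul_one _
      _ < 1 := hν _ hi₀
  have hdne : ∀ α : Fin s → Fin n, α ≠ (fun _ => e) → dd α ≠ 0 := by
    intro α hα h0
    have h1 : (∏ i, ν (α i)) = 1 := by
      have := sub_eq_zero.mp h0
      exact this
    have := habs α hα
    rw [h1] at this
    simp at this
  set A : (Fin s → Fin n) → ℂ := fun α => if α = (fun _ => e) then 0 else cc α / dd α with hA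
  refine ⟨fun z => -(∑ α : Fin s → Fin n, A α * ∏ i, z (α i)), ?_, ?_, ?_, ?_, ?_⟩
  · intro x
    apply AnalyticAt.neg
    apply Finset.analyticAt_fun_sum
    intro α _
    exact (analyticAt_const).mul (monomial_analytic α x)
  · have : ∀ α : Fin s → Fin n, (∏ i, (0: Fin n → ℂ) (α i)) = 0 := by
      intro α
      have : (0 : Fin n → ℂ) (α (⟨0, hs⟩ : Fin s)) = 0 := rfl
      apply Finset.prod_eq_zero (Finset.mem_univ (⟨0, hs⟩ : Fin s)) this
    simp only [Pi.zero_apply]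
    simp [zero_pow (by omega : s ≠ 0)]
  · refine ⟨∑ α : Fin s → Fin n, ‖A α‖, Finset.sum_nonneg (fun _ _ => norm_nonneg _), ?_⟩
    intro z
    rw [norm_neg]
    calc ‖∑ α : Fin s → Fin n, A α * ∏ i, z (α i)‖
        ≤ ∑ α : Fin s → Fin n, ‖A α * ∏ i, z (α i)‖ := norm_sum_le _ _
      _ ≤ ∑ α : Fin s → Fin n, ‖A α‖ * ‖z‖ ^ s := by
          apply Finset.sum_le_sum
          intro α _
          rw [norm_mul]
          exact mul_le_mul_of_nonneg_left (monomial_bound α z) (norm_nonneg _)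
      _ = (∑ α : Fin s → Fin n, ‖A α‖) * ‖z‖ ^ s := by rw [← Finset.sum_mul]
  · intro z
    have hmono : ∀ α : Fin s → Fin n, (∏ i, (diagCLM ν z) (α i))
        = (∏ i, ν (α i)) * ∏ i, z (α i) := by
      intro α
      rw [← Finset.prod_mul_distrib]
      apply Finset.prod_congr rfl
      intro i _
      simp
    rw [cmm_expansion Q z]
    simp only []
    calc -(∑ α : Fin s → Fin n, A α * ∏ i, (diagCLM ν z) (α i))
          - -(∑ α : Fin s → Fin n, A α * ∏ i, z (α i))
        = -(∑ α : Fin s → Fin n,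
            (A α * ∏ i, (diagCLM ν z) (α i) - A α * ∏ i, z (α i))) := by
          rw [Finset.sum_sub_distrib]; ring
      _ = -(∑ α : Fin s → Fin n, (∏ i, z (α i)) • (Q fun i => (Pi.single (α i) 1 : Fin n → ℂ))) := by
          congr 1
          apply Finset.sum_congr rfl
          intro α _
          rw [hmono α]
          by_cases hα : α = (fun _ => e)
          · have hcc0 : (Q fun i => (Pi.single (α i) 1 : Fin n → ℂ)) = 0 := by
              rw [hα]; exact hres
            rw [hcc0, smul_zero]
            have hA0 : A α = 0 := by rw [hA]; simp [hα]
            rw [hA0]; ring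
          · have hd := hdne α hα
            simp only [hA, hα, if_false, smul_eq_mul]
            rw [div_mul_eq_mul_div, div_mul_eq_mul_div, ← sub_div, div_eq_iff hd]
            simp only [hdd, hcc]
            ring
  · refine ⟨(∑ α : Fin s → Fin n, ‖A α‖) * s, by positivity, ?_⟩
    intro a b
    simp only []
    set M := max ‖a‖ ‖b‖ with hM
    have hM0 : 0 ≤ M := le_max_of_le_left (norm_nonneg a)
    have hterm : ∀ α : Fin s → Fin n, ‖(∏ i, a (α i)) - ∏ i, b (α i)‖
        ≤ ((s : ℝ) * ‖a - b‖) * M ^ (s - 1) := by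
      intro α
      have h1 := norm_prod_sub_prod_le (Finset.univ : Finset (Fin s))
        (fun i => a (α i)) (fun i => b (α i)) M hM0
        (fun i _ => le_max_of_le_left (norm_le_pi_norm a (α i)))
        (fun i _ => le_max_of_le_right (norm_le_pi_norm b (α i)))
      have hsum : (∑ i : Fin s, ‖a (α i) - b (α i)‖) ≤ (s:ℝ) * ‖a - b‖ := by
        calc ∑ i : Fin s, ‖a (α i) - b (α i)‖ ≤ ∑ _i : Fin s, ‖a - b‖ :=
              Finset.sum_le_sum (fun i _ => by
                have he : a (α i) - b (α i) = (a - b) (α i) := rfl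
                rw [he]; exact norm_le_pi_norm _ _)
          _ = (s:ℝ) * ‖a-b‖ := by
              rw [Finset.sum_const, Finset.card_univ, Fintype.card_fin, nsmul_eq_mul]
      have hcard : (Finset.univ : Finset (Fin s)).card = s := by
        rw [Finset.card_univ, Fintype.card_fin]
      rw [hcard] at h1
      calc ‖(∏ i, a (α i)) - ∏ i, b (α i)‖
          ≤ (∑ i : Fin s, ‖a (α i) - b (α i)‖) * M ^ (s - 1) := h1
        _ ≤ ((s : ℝ) * ‖a - b‖) * M ^ (s - 1) :=
            mul_le_mul_of_nonneg_right hsum (by positivity)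
    calc ‖-(∑ α : Fin s → Fin n, A α * ∏ i, a (α i))
          - -(∑ α : Fin s → Fin n, A α * ∏ i, b (α i))‖
        = ‖∑ α : Fin s → Fin n, (A α * ∏ i, a (α i) - A α * ∏ i, b (α i))‖ := by
          rw [Finset.sum_sub_distrib]
          rw [show -(∑ α : Fin s → Fin n, A α * ∏ i, a (α i))
            - -(∑ α : Fin s → Fin n, A α * ∏ i, b (α i))
            = -((∑ α : Fin s → Fin n, A α * ∏ i, a (α i))
              - (∑ α : Fin s → Fin n, A α * ∏ i, b (α i))) from by ring]
          rw [norm_neg]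
      _ ≤ ∑ α : Fin s → Fin n, ‖A α * ∏ i, a (α i) - A α * ∏ i, b (α i)‖ := norm_sum_le _ _
      _ ≤ ∑ α : Fin s → Fin n, ‖A α‖ * (((s : ℝ) * ‖a - b‖) * M ^ (s - 1)) := by
          apply Finset.sum_le_sum
          intro α _
          rw [← mul_sub, norm_mul]
          exact mul_le_mul_of_nonneg_left (hterm α) (norm_nonneg _)
      _ = (∑ α : Fin s → Fin n, ‖A α‖) * s * M ^ (s-1) * ‖a - b‖ := by
          rw [← Finset.sum_mul]
          ring


lemma pow_mul_isBigO_pow {k l : ℕ} :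
    (fun ζ : ℂ => ‖ζ‖ ^ k * ‖ζ‖ ^ l) =O[𝓝 0] fun ζ : ℂ => ‖ζ‖ ^ (k + l) := by
  apply IsBigO.of_bound 1
  filter_upwards with ζ
  have h1 : ‖‖ζ‖ ^ k * ‖ζ‖ ^ l‖ = ‖ζ‖ ^ k * ‖ζ‖ ^ l := Real.norm_of_nonneg (by positivity)
  have h2 : ‖‖ζ‖ ^ (k+l)‖ = ‖ζ‖ ^ (k+l) := Real.norm_of_nonneg (by positivity)
  rw [h1, h2, one_mul, ← pow_add]

lemma resonant_coeff_vanish (e : Fin n) {s : ℕ} (hs : 1 ≤ s)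
    (Q : ContinuousMultilinearMap ℂ (fun _ : Fin s => (Fin n → ℂ)) ℂ)
    {γ : ℂ → (Fin n → ℂ)} (hγa : AnalyticAt ℂ γ 0) (hγ0 : γ 0 = 0)
    {c : ℂ} (hc : c ≠ 0) (hγe : (fun ζ : ℂ => γ ζ e - c * ζ) =O[𝓝 0] fun ζ : ℂ => ‖ζ‖^2)
    (hγj : ∀ j, j ≠ e → (fun ζ : ℂ => γ ζ j) =O[𝓝 0] fun ζ : ℂ => ‖ζ‖^2)
    (hQγ : (fun ζ : ℂ => Q (fun _ => γ ζ)) =O[𝓝 0] fun ζ : ℂ => ‖ζ‖^(s+1)) :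
    (Q fun _ => (Pi.single e 1 : Fin n → ℂ)) = 0 := by
  classical
  set cres : ℂ := Q fun _ => (Pi.single e 1 : Fin n → ℂ) with hcres
  have hγO : γ =O[𝓝 0] fun ζ : ℂ => ‖ζ‖ := isBigO_norm_of_fixed hγa hγ0
  -- each non-resonant term is O(ζ^{s+1})
  have hterm : ∀ α : Fin s → Fin n, α ≠ (fun _ => e) →
      (fun ζ : ℂ => (∏ i, γ ζ (α i)) • (Q fun i => (Pi.single (α i) 1 : Fin n → ℂ)))
        =O[𝓝 0] fun ζ : ℂ => ‖ζ‖ ^ (s+1) := by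
    intro α hα
    have : ∃ i₀, α i₀ ≠ e := by
      by_contra hco; push_neg at hco; exact hα (funext hco)
    obtain ⟨i₀, hi₀⟩ := this
    have part1 : (fun ζ : ℂ => γ ζ (α i₀)) =O[𝓝 0] fun ζ : ℂ => ‖ζ‖^2 := hγj _ hi₀
    have part2 : (fun ζ : ℂ => ∏ i ∈ Finset.univ.erase i₀, γ ζ (α i))
        =O[𝓝 0] fun ζ : ℂ => ‖ζ‖^(s-1) := by
      have step1 : (fun ζ : ℂ => ∏ i ∈ Finset.univ.erase i₀, γ ζ (α i))
          =O[𝓝 0] fun ζ : ℂ => ‖γ ζ‖^(s-1) := by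
        apply IsBigO.of_bound 1
        filter_upwards with ζ
        rw [one_mul, norm_prod, Real.norm_of_nonneg (by positivity)]
        calc ∏ i ∈ Finset.univ.erase i₀, ‖γ ζ (α i)‖
            ≤ ∏ _i ∈ Finset.univ.erase i₀, ‖γ ζ‖ :=
              Finset.prod_le_prod (fun i _ => norm_nonneg _)
                (fun i _ => norm_le_pi_norm _ _)
          _ = ‖γ ζ‖ ^ (s-1) := by
              rw [Finset.prod_const, Finset.card_erase_of_mem (Finset.mem_univ i₀),
                Finset.card_univ, Fintype.card_fin]
      exact step1.trans (hγO.norm_left.pow (s-1))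
    have hmul := part1.mul part2
    have hcomb : (fun ζ : ℂ => γ ζ (α i₀) * ∏ i ∈ Finset.univ.erase i₀, γ ζ (α i))
        =O[𝓝 0] fun ζ : ℂ => ‖ζ‖ ^ (s+1) := by
      refine hmul.trans ?_
      have h2 := pow_mul_isBigO_pow (k := 2) (l := s - 1)
      have he : 2 + (s - 1) = s + 1 := by omega
      rw [he] at h2
      exact h2
    have hfn : (fun ζ : ℂ => (∏ i, γ ζ (α i)) • (Q fun i => (Pi.single (α i) 1 : Fin n → ℂ)))
        = fun ζ : ℂ => (Q fun i => (Pi.single (α i) 1 : Fin n → ℂ))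
          * (γ ζ (α i₀) * ∏ i ∈ Finset.univ.erase i₀, γ ζ (α i)) := by
      funext ζ
      rw [smul_eq_mul, mul_comm,
        ← Finset.mul_prod_erase Finset.univ (fun i => γ ζ (α i)) (Finset.mem_univ i₀)]
    rw [hfn]
    exact IsBigO.const_mul_left hcomb _
  -- sum of non-resonant terms
  have hsum : (fun ζ : ℂ => ∑ α ∈ Finset.univ.filter (fun α : Fin s → Fin n => ¬(α = fun _ => e)),
      (∏ i, γ ζ (α i)) • (Q fun i => (Pi.single (α i) 1 : Fin n → ℂ)))
      =O[𝓝 0] fun ζ : ℂ => ‖ζ‖ ^ (s+1) := by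
    apply Asymptotics.IsBigO.fun_sum
    intro α hα
    rw [Finset.mem_filter] at hα
    exact hterm α hα.2
  -- decomposition
  have hdecomp : ∀ ζ : ℂ, (Q fun _ => γ ζ) = (γ ζ e)^s * cres
      + ∑ α ∈ Finset.univ.filter (fun α : Fin s → Fin n => ¬(α = fun _ => e)),
        (∏ i, γ ζ (α i)) • (Q fun i => (Pi.single (α i) 1 : Fin n → ℂ)) := by
    intro ζ
    rw [cmm_expansion Q (γ ζ)]
    rw [← Finset.sum_filter_add_sum_filter_not Finset.univ (fun α : Fin s → Fin n => α = fun _ => e)]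
    congr 1
    rw [Finset.filter_eq' Finset.univ (fun _ => e)]
    simp only [Finset.mem_univ, if_true, Finset.sum_singleton]
    rw [Finset.prod_const, Finset.card_univ, Fintype.card_fin, smul_eq_mul]
  have hres_term : (fun ζ : ℂ => (γ ζ e)^s * cres) =O[𝓝 0] fun ζ : ℂ => ‖ζ‖^(s+1) := by
    have heq : (fun ζ : ℂ => (γ ζ e)^s * cres) = fun ζ : ℂ => (Q fun _ => γ ζ)
        - ∑ α ∈ Finset.univ.filter (fun α : Fin s → Fin n => ¬(α = fun _ => e)),
          (∏ i, γ ζ (α i)) • (Q fun i => (Pi.single (α i) 1 : Fin n → ℂ)) := by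
      funext ζ; rw [hdecomp ζ]; ring
    rw [heq]
    exact hQγ.sub hsum
  -- lower bound on γ ζ e
  obtain ⟨K, hK⟩ := hγe.bound
  have habs_c : (0:ℝ) < ‖c‖ := by
    simpa using (norm_pos_iff.mpr hc)
  have hlower : ∀ᶠ ζ : ℂ in 𝓝 0, (‖c‖ / 2) * ‖ζ‖ ≤ ‖γ ζ e‖ := by
    have hsmall : ∀ᶠ ζ : ℂ in 𝓝 0, K * ‖ζ‖ ≤ ‖c‖ / 2 := by
      have : Tendsto (fun ζ : ℂ => K * ‖ζ‖) (𝓝 0) (𝓝 0) := by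
        exact (continuous_const.mul continuous_norm).tendsto' (0:ℂ) 0 (by simp)
      exact this.eventually (eventually_le_nhds (by positivity))
    filter_upwards [hK, hsmall] with ζ h1 h2
    have h3 : ‖γ ζ e - c * ζ‖ ≤ K * ‖ζ‖^2 := by
      calc ‖γ ζ e - c * ζ‖ ≤ K * ‖‖ζ‖^2‖ := h1
        _ = K * ‖ζ‖^2 := by rw [Real.norm_of_nonneg (by positivity)]
    have h4 : ‖c * ζ‖ - ‖γ ζ e - c * ζ‖ ≤ ‖γ ζ e‖ := by
      have := norm_sub_norm_le (c * ζ) (c * ζ - γ ζ e)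
      simp only [sub_sub_cancel] at this
      calc ‖c * ζ‖ - ‖γ ζ e - c * ζ‖ = ‖c * ζ‖ - ‖c * ζ - γ ζ e‖ := by rw [norm_sub_rev]
        _ ≤ ‖γ ζ e‖ := this
    have h5 : K * ‖ζ‖^2 ≤ (‖c‖ / 2) * ‖ζ‖ := by
      have : K * ‖ζ‖^2 = (K * ‖ζ‖) * ‖ζ‖ := by ring
      rw [this]
      exact mul_le_mul_of_nonneg_right h2 (norm_nonneg _)
    have h6 : ‖c * ζ‖ = ‖c‖ * ‖ζ‖ := by
      rw [norm_mul]
    calc (‖c‖ / 2) * ‖ζ‖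
        = ‖c‖ * ‖ζ‖ - (‖c‖ / 2) * ‖ζ‖ := by ring
      _ ≤ ‖c * ζ‖ - ‖γ ζ e - c * ζ‖ := by
          rw [h6]
          exact sub_le_sub (le_refl _) (h3.trans h5)
      _ ≤ ‖γ ζ e‖ := h4
  -- conclude
  obtain ⟨C, hC⟩ := hres_term.bound
  have hkey : ∀ᶠ ζ : ℂ in 𝓝[≠] (0:ℂ),
      ((‖c‖ / 2)^s * ‖cres‖) ≤ C * ‖ζ‖ := by
    filter_upwards [nhdsWithin_le_nhds hC, nhdsWithin_le_nhds hlower,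
      self_mem_nhdsWithin] with ζ h1 h2 (h3 : ζ ≠ 0)
    have hζ : (0:ℝ) < ‖ζ‖ := norm_pos_iff.mpr h3
    have h4 : ‖(γ ζ e)^s * cres‖ ≤ C * ‖ζ‖^(s+1) := by
      calc ‖(γ ζ e)^s * cres‖ ≤ C * ‖‖ζ‖^(s+1)‖ := h1
        _ = C * ‖ζ‖^(s+1) := by rw [Real.norm_of_nonneg (by positivity)]
    have h5 : ((‖c‖ / 2) * ‖ζ‖)^s * ‖cres‖ ≤ ‖(γ ζ e)^s * cres‖ := by
      rw [norm_mul, norm_pow]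
      exact mul_le_mul_of_nonneg_right
        (pow_le_pow_left₀ (by positivity) h2 s) (norm_nonneg _)
    have h6 : ((‖c‖ / 2)^s * ‖cres‖) * ‖ζ‖^s ≤ (C * ‖ζ‖) * ‖ζ‖^s := by
      calc ((‖c‖ / 2)^s * ‖cres‖) * ‖ζ‖^s
          = ((‖c‖ / 2) * ‖ζ‖)^s * ‖cres‖ := by rw [mul_pow]; ring
        _ ≤ ‖(γ ζ e)^s * cres‖ := h5
        _ ≤ C * ‖ζ‖^(s+1) := h4
        _ = (C * ‖ζ‖) * ‖ζ‖^s := by ring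
    exact le_of_mul_le_mul_right h6 (by positivity)
  have hlim : Tendsto (fun ζ : ℂ => C * ‖ζ‖) (𝓝[≠] 0) (𝓝 0) := by
    apply Tendsto.mono_left ?_ nhdsWithin_le_nhds
    exact (continuous_const.mul continuous_norm).tendsto' (0:ℂ) 0 (by simp)
  have hfinal : (‖c‖ / 2)^s * ‖cres‖ ≤ 0 :=
    le_of_tendsto_of_tendsto tendsto_const_nhds hlim hkey
  have hpos : (0:ℝ) < (‖c‖ / 2)^s := by positivity
  have : ‖cres‖ ≤ 0 := by
    by_contra hcon
    push_neg at hcon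
    nlinarith
  exact norm_le_zero_iff.1 this


lemma component_isBigO {g : (Fin n → ℂ) → (Fin n → ℂ)} {h : (Fin n → ℂ) → ℝ}
    (hg : g =O[𝓝 0] h) (j : Fin n) : (fun z => g z j) =O[𝓝 0] h := by
  refine IsBigO.trans ?_ hg
  apply IsBigO.of_bound 1
  filter_upwards with z
  rw [one_mul]
  exact norm_le_pi_norm (g z) j

lemma exists_r (e : Fin n) (ν : Fin n → ℂ) (hνe : ν e = 1)
    (hν : ∀ j, j ≠ e → ‖ν j‖ < 1)
    {Φ : (Fin n → ℂ) → (Fin n → ℂ)} (hΦa : AnalyticAt ℂ Φ 0) (hΦ0 : Φ 0 = 0)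
    (hΦd : HasFDerivAt Φ (diagCLM ν) 0)
    {γ : ℂ → (Fin n → ℂ)} (hγa : AnalyticAt ℂ γ 0) (hγ0 : γ 0 = 0)
    (hfix : ∀ᶠ ζ in 𝓝 (0:ℂ), Φ (γ ζ) = γ ζ)
    {c : ℂ} (hc : c ≠ 0) (hγe : (fun ζ : ℂ => γ ζ e - c * ζ) =O[𝓝 0] fun ζ : ℂ => ‖ζ‖^2)
    (hγj : ∀ j, j ≠ e → (fun ζ : ℂ => γ ζ j) =O[𝓝 0] fun ζ : ℂ => ‖ζ‖^2) :
    ∀ t : ℕ, 2 ≤ t → ∃ r : (Fin n → ℂ) → ℂ, AnalyticAt ℂ r 0 ∧ r 0 = 0 ∧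
      ((fun z => r z - z e) =O[𝓝 0] fun z : Fin n → ℂ => ‖z‖^2) ∧
      ((fun z => r (Φ z) - r z) =O[𝓝 0] fun z : Fin n → ℂ => ‖z‖ ^ t) := by
  have hΦ2 : (fun z => Φ z - diagCLM ν z) =O[𝓝 0] fun z : Fin n → ℂ => ‖z‖^2 :=
    isBigO_sub_linear hΦa hΦ0 hΦd
  have hΦO : Φ =O[𝓝 0] fun z : Fin n → ℂ => ‖z‖ := isBigO_norm_of_fixed hΦa hΦ0
  have hγO : γ =O[𝓝 0] fun ζ : ℂ => ‖ζ‖ := isBigO_norm_of_fixed hγa hγ0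
  have hγt : Tendsto γ (𝓝 0) (𝓝 0) := by
    have := hγa.continuousAt.tendsto
    rwa [hγ0] at this
  intro t ht
  induction t, ht using Nat.le_induction with
  | base =>
    refine ⟨fun z => z e, ?_, rfl, ?_, ?_⟩
    · exact (ContinuousLinearMap.proj (R := ℂ) (φ := fun _ : Fin n => ℂ) e).analyticAt 0
    · simp only [sub_self]
      exact isBigO_zero _ _
    · have : (fun z : Fin n → ℂ => Φ z e - z e)
          = fun z : Fin n → ℂ => (Φ z - diagCLM ν z) e := by
        funext z
        simp [hνe]
      simp only []
      rw [this]
      exact component_isBigO hΦ2 e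
  | succ t ht ih =>
    obtain ⟨r, hra, hr0, hre, hrE⟩ := ih
    set Efun : (Fin n → ℂ) → ℂ := fun z => r (Φ z) - r z with hEfun
    have hEa : AnalyticAt ℂ Efun 0 := by
      have h1 : AnalyticAt ℂ r (Φ 0) := by rwa [hΦ0]
      exact (h1.comp hΦa).sub hra
    obtain ⟨p, hp⟩ := hEa
    set Qt : (Fin n → ℂ) → ℂ := fun z => p t (fun _ => z) with hQt
    have htail : (fun z => Efun z - p.partialSum (t+1) z) =O[𝓝 0]
        fun z : Fin n → ℂ => ‖z‖^(t+1) := by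
      have := hp.isBigO_sub_partialSum_pow (t+1)
      simpa using this
    have hlow := coeffs_vanish_of_isBigO hp hrE
    have hps : ∀ z, p.partialSum (t+1) z = Qt z := by
      intro z
      unfold FormalMultilinearSeries.partialSum
      rw [Finset.sum_range_succ]
      rw [Finset.sum_eq_zero (fun m hm => hlow m (Finset.mem_range.1 hm) z)]
      rw [zero_add]
    have hEmQ : (fun z => Efun z - Qt z) =O[𝓝 0] fun z : Fin n → ℂ => ‖z‖^(t+1) := by
      refine htail.congr' ?_ EventuallyEq.rfl
      filter_upwards with z
      rw [hps]
    have hEγ : ∀ᶠ ζ in 𝓝 (0:ℂ), Efun (γ ζ) = 0 := by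
      filter_upwards [hfix] with ζ hζ
      rw [hEfun]
      simp only []
      rw [hζ, sub_self]
    have hQγ : (fun ζ : ℂ => Qt (γ ζ)) =O[𝓝 0] fun ζ : ℂ => ‖ζ‖^(t+1) := by
      have hcomp := (hEmQ.comp_tendsto hγt).trans (hγO.norm_left.pow (t+1))
      have hneg := hcomp.neg_left
      refine hneg.congr' ?_ EventuallyEq.rfl
      filter_upwards [hEγ] with ζ hζ
      simp only [Function.comp_apply, hζ, zero_sub, neg_neg]
    have hres := resonant_coeff_vanish e (by omega : 1 ≤ t) (p t) hγa hγ0 hc hγe hγj hQγ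
    obtain ⟨P, hPa, hP0, ⟨K1, hK1, hK1b⟩, hhom, ⟨K2, hK2, hK2b⟩⟩ :=
      homological_step e ν hνe hν (by omega : 1 ≤ t) (p t) hres
    refine ⟨fun z => r z + P z, hra.add (hPa 0), by simp only []; rw [hr0, hP0, add_zero], ?_, ?_⟩
    · have hP2 : P =O[𝓝 0] fun z : Fin n → ℂ => ‖z‖^2 := by
        apply IsBigO.of_bound K1
        filter_upwards [Metric.ball_mem_nhds (0 : Fin n → ℂ) one_pos] with z hz
        rw [mem_ball, dist_zero_right] at hz
        have h1 : ‖z‖^t ≤ ‖z‖^2 :=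
          pow_le_pow_of_le_one (norm_nonneg _) (le_of_lt hz) ht
        calc ‖P z‖ ≤ K1 * ‖z‖^t := hK1b z
          _ ≤ K1 * ‖z‖^2 := mul_le_mul_of_nonneg_left h1 hK1
          _ = K1 * ‖‖z‖^2‖ := by rw [Real.norm_of_nonneg (by positivity)]
      have : (fun z : Fin n → ℂ => (r z + P z) - z e)
          = fun z => (r z - z e) + P z := by funext z; ring
      simp only []
      rw [this]
      exact hre.add hP2
    · -- new error estimate
      have hmid : (fun z => P (Φ z) - P (diagCLM ν z)) =O[𝓝 0]
          fun z : Fin n → ℂ => ‖z‖^(t+1) := by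
        obtain ⟨C1, hC1pos, hC1⟩ := hΦO.exists_pos
        rw [IsBigOWith] at hC1
        obtain ⟨C3, hC3pos, hC3⟩ := hΦ2.exists_pos
        rw [IsBigOWith] at hC3
        set C2 : ℝ := max C1 ‖diagCLM (n := n) ν‖ with hC2
        have hC2nn : 0 ≤ C2 := le_trans (le_of_lt hC1pos) (le_max_left _ _)
        apply IsBigO.of_bound (K2 * C2^(t-1) * C3)
        filter_upwards [hC1, hC3] with z h1 h3
        have hb1 : ‖Φ z‖ ≤ C2 * ‖z‖ := by
          calc ‖Φ z‖ ≤ C1 * ‖‖z‖‖ := h1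
            _ = C1 * ‖z‖ := by rw [norm_norm]
            _ ≤ C2 * ‖z‖ := mul_le_mul_of_nonneg_right (le_max_left _ _) (norm_nonneg _)
        have hb2 : ‖diagCLM ν z‖ ≤ C2 * ‖z‖ := by
          calc ‖diagCLM ν z‖ ≤ ‖diagCLM (n := n) ν‖ * ‖z‖ := (diagCLM ν).le_opNorm z
            _ ≤ C2 * ‖z‖ := mul_le_mul_of_nonneg_right (le_max_right _ _) (norm_nonneg _)
        have hmax : max ‖Φ z‖ ‖diagCLM ν z‖ ≤ C2 * ‖z‖ := max_le hb1 hb2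
        have hd : ‖Φ z - diagCLM ν z‖ ≤ C3 * ‖z‖^2 := by
          calc ‖Φ z - diagCLM ν z‖ ≤ C3 * ‖‖z‖^2‖ := h3
            _ = C3 * ‖z‖^2 := by rw [Real.norm_of_nonneg (by positivity)]
        calc ‖P (Φ z) - P (diagCLM ν z)‖
            ≤ K2 * (max ‖Φ z‖ ‖diagCLM ν z‖)^(t-1) * ‖Φ z - diagCLM ν z‖ := hK2b _ _
          _ ≤ K2 * (C2 * ‖z‖)^(t-1) * (C3 * ‖z‖^2) := by
              apply mul_le_mul
              · apply mul_le_mul_of_nonneg_left ?_ hK2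
                exact pow_le_pow_left₀ (le_trans (norm_nonneg _) (le_max_left _ _)) hmax _
              · exact hd
              · exact norm_nonneg _
              · positivity
          _ = (K2 * C2^(t-1) * C3) * (‖z‖^(t-1) * ‖z‖^2) := by ring
          _ = (K2 * C2^(t-1) * C3) * ‖z‖^(t+1) := by
              rw [← pow_add]
              congr 2
              omega
          _ = (K2 * C2^(t-1) * C3) * ‖‖z‖^(t+1)‖ := by
              rw [Real.norm_of_nonneg (by positivity)]
      have hsplit : (fun z => (r (Φ z) + P (Φ z)) - (r z + P z))
          = fun z => (Efun z - Qt z) + (P (Φ z) - P (diagCLM ν z)) := by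
        funext z
        have := hhom z
        rw [hEfun]
        simp only []
        have hq : Qt z = (p t) fun _ => z := rfl
        rw [hq]
        linear_combination this
      simp only []
      rw [hsplit]
      exact hEmQ.add hmid


lemma norm_sq_isLittleO {E : Type*} [NormedAddCommGroup E] [NormedSpace ℂ E] :
    (fun z : E => ‖z‖ ^ 2) =o[𝓝 (0:E)] fun z : E => z := by
  rw [isLittleO_iff]
  intro c hc
  filter_upwards [Metric.ball_mem_nhds (0:E) hc] with z hz
  rw [mem_ball, dist_zero_right] at hz
  have h2 : ‖z‖ ^ 2 = ‖z‖ * ‖z‖ := by ring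
  rw [Real.norm_of_nonneg (by positivity), h2]
  exact mul_le_mul_of_nonneg_right (le_of_lt hz) (norm_nonneg _)

lemma hasFDerivAt_of_isBigO_sq {E F : Type*} [NormedAddCommGroup E] [NormedSpace ℂ E]
    [NormedAddCommGroup F] [NormedSpace ℂ F] {f : E → F} {L : E →L[ℂ] F} (h0 : f 0 = 0)
    (h : (fun z => f z - L z) =O[𝓝 (0:E)] fun z => ‖z‖ ^ 2) : HasFDerivAt f L 0 := by
  apply hasFDerivAt_iff_isLittleO_nhds_zero.2
  have : (fun z : E => f (0 + z) - f 0 - L z) = fun z => f z - L z := by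
    funext z; rw [zero_add, h0, sub_zero]
  rw [this]
  exact h.trans_isLittleO norm_sq_isLittleO

lemma isBigO_comp_pow {E E' F : Type*} [NormedAddCommGroup E] [NormedSpace ℂ E]
    [NormedAddCommGroup E'] [NormedSpace ℂ E'] [NormedAddCommGroup F] [NormedSpace ℂ F]
    {g : E → F} {k : ℕ} (hg : g =O[𝓝 (0:E)] fun z => ‖z‖ ^ k) {σ : E' → E}
    (hσa : AnalyticAt ℂ σ 0) (hσ0 : σ 0 = 0) :
    (fun w => g (σ w)) =O[𝓝 (0:E')] fun w => ‖w‖ ^ k := by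
  have hσt : Tendsto σ (𝓝 0) (𝓝 0) := by
    have := hσa.continuousAt.tendsto
    rwa [hσ0] at this
  have h1 := hg.comp_tendsto hσt
  have h2 : (fun w : E' => ‖σ w‖ ^ k) =O[𝓝 (0:E')] fun w => ‖w‖ ^ k :=
    (isBigO_norm_of_fixed hσa hσ0).norm_left.pow k
  exact (h1.trans h2)

lemma isBigO_pow_weaken {E F : Type*} [NormedAddCommGroup E] [NormedSpace ℂ E]
    [NormedAddCommGroup F] {f : E → F} {a b : ℕ} (hab : a ≤ b)
    (h : f =O[𝓝 (0:E)] fun z => ‖z‖ ^ b) : f =O[𝓝 (0:E)] fun z => ‖z‖ ^ a := by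
  obtain ⟨C, hC⟩ := h.bound
  apply IsBigO.of_bound |C|
  filter_upwards [hC, Metric.ball_mem_nhds (0:E) one_pos] with z h1 h2
  rw [mem_ball, dist_zero_right] at h2
  rw [Real.norm_of_nonneg (by positivity)]
  calc ‖f z‖ ≤ C * ‖‖z‖ ^ b‖ := h1
    _ = C * ‖z‖ ^ b := by rw [Real.norm_of_nonneg (by positivity)]
    _ ≤ |C| * ‖z‖ ^ b :=
        mul_le_mul_of_nonneg_right (le_abs_self C) (by positivity)
    _ ≤ |C| * ‖z‖ ^ a :=
        mul_le_mul_of_nonneg_left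
          (pow_le_pow_of_le_one (norm_nonneg _) (le_of_lt h2) hab) (abs_nonneg C)

lemma diagCLM_comp (μ μ' : Fin n → ℂ) :
    (diagCLM μ).comp (diagCLM μ') = diagCLM (fun j => μ j * μ' j) := by
  refine ContinuousLinearMap.ext fun z => funext fun j => ?_
  simp [mul_assoc]

lemma iterate_hasFDerivAt {f : (Fin n → ℂ) → (Fin n → ℂ)} (h0 : f 0 = 0) {μ : Fin n → ℂ}
    (hd : HasFDerivAt f (diagCLM μ) 0) (m : ℕ) :
    HasFDerivAt (f^[m]) (diagCLM (fun j => μ j ^ m)) 0 := by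
  induction m with
  | zero =>
    have h1 : diagCLM (fun j : Fin n => μ j ^ 0) = ContinuousLinearMap.id ℂ (Fin n → ℂ) := by
      refine ContinuousLinearMap.ext fun z => funext fun j => ?_
      simp
    rw [Function.iterate_zero, h1]
    exact hasFDerivAt_id 0
  | succ m ih =>
    rw [Function.iterate_succ']
    have hd' : HasFDerivAt f (diagCLM μ) (f^[m] 0) := by rwa [iterate_fixed h0]
    have hcomp := hd'.comp 0 ih
    rw [diagCLM_comp] at hcomp
    have h2 : (fun j : Fin n => μ j * μ j ^ m) = fun j : Fin n => μ j ^ (m+1) := by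
      funext j; rw [← pow_succ']
    rwa [h2] at hcomp

noncomputable def diagCLE (μ : Fin n → ℂ) (h : ∀ j, μ j ≠ 0) :
    (Fin n → ℂ) ≃L[ℂ] (Fin n → ℂ) :=
  (LinearEquiv.piCongrRight (fun j => LinearEquiv.smulOfNeZero ℂ ℂ (μ j) (h j))).toContinuousLinearEquiv

lemma diagCLE_apply (μ : Fin n → ℂ) (h : ∀ j, μ j ≠ 0) (z : Fin n → ℂ) (j : Fin n) :
    diagCLE μ h z j = μ j * z j := rfl

lemma diagCLE_clm_apply (μ : Fin n → ℂ) (h : ∀ j, μ j ≠ 0) (z : Fin n → ℂ) (j : Fin n) :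
    ((diagCLE μ h : (Fin n → ℂ) →L[ℂ] (Fin n → ℂ)) z) j = μ j * z j := rfl


lemma curve_tangent (e : Fin n) {ν : Fin n → ℂ} (hν1 : ∀ j, j ≠ e → ν j ≠ 1)
    {Φ : (Fin n → ℂ) → (Fin n → ℂ)} (hΦd : HasFDerivAt Φ (diagCLM ν) 0)
    {γ : ℂ → (Fin n → ℂ)} (hγa : AnalyticAt ℂ γ 0) (hγ0 : γ 0 = 0)
    (hγd : deriv γ 0 ≠ 0) (hfix : ∀ᶠ ζ in 𝓝 (0:ℂ), Φ (γ ζ) = γ ζ) :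
    ∃ c : ℂ, c ≠ 0 ∧ ((fun ζ : ℂ => γ ζ e - c * ζ) =O[𝓝 0] fun ζ : ℂ => ‖ζ‖^2) ∧
      (∀ j, j ≠ e → (fun ζ : ℂ => γ ζ j) =O[𝓝 0] fun ζ : ℂ => ‖ζ‖^2) := by
  set v := deriv γ 0 with hv
  have hγder : HasDerivAt γ v 0 := hγa.differentiableAt.hasDerivAt
  have hΦd' : HasFDerivAt Φ (diagCLM ν) (γ 0) := by rwa [hγ0]
  have hcomp : HasDerivAt (fun ζ => Φ (γ ζ)) (diagCLM ν v) 0 :=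
    hΦd'.comp_hasDerivAt 0 hγder
  have hγder2 : HasDerivAt γ (diagCLM ν v) 0 := by
    apply hcomp.congr_of_eventuallyEq
    filter_upwards [hfix] with ζ hζ
    exact hζ.symm
  have huniq : diagCLM ν v = v := hγder2.unique hγder
  have hvj : ∀ j, j ≠ e → v j = 0 := by
    intro j hj
    have h1 : ν j * v j = v j := by
      have := congrFun huniq j
      simpa using this
    by_contra hne
    apply hν1 j hj
    have h2 : (ν j - 1) * v j = 0 := by linear_combination h1
    rcases mul_eq_zero.1 h2 with h | h
    · linear_combination h
    · exact absurd h hne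
  refine ⟨v e, ?_, ?_, ?_⟩
  · intro hve
    apply hγd
    funext j
    by_cases hj : j = e
    · rw [hj]; exact hve
    · exact hvj j hj
  · have hcomp_e : HasDerivAt (fun ζ => γ ζ e) (v e) 0 := by
      have hproj := (ContinuousLinearMap.proj (R := ℂ) (φ := fun _ : Fin n => ℂ) e).hasFDerivAt
        (x := γ 0)
      exact hproj.comp_hasDerivAt 0 hγder
    have hL : HasFDerivAt (fun ζ => γ ζ e)
        (ContinuousLinearMap.smulRight (1 : ℂ →L[ℂ] ℂ) (v e)) 0 :=
      hasDerivAt_iff_hasFDerivAt.1 hcomp_e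
    have hana : AnalyticAt ℂ (fun ζ => γ ζ e) 0 := by
      have := ((ContinuousLinearMap.proj (R := ℂ) (φ := fun _ : Fin n => ℂ) e).analyticAt
        (γ 0)).comp hγa
      exact this
    have h0 : (fun ζ => γ ζ e) 0 = 0 := by show γ 0 e = 0; rw [hγ0]; rfl
    have := isBigO_sub_linear hana h0 hL
    refine this.congr' ?_ EventuallyEq.rfl
    filter_upwards with ζ
    simp only [ContinuousLinearMap.smulRight_apply, ContinuousLinearMap.one_apply,
      smul_eq_mul]
    ring_nf
  · intro j hj
    have hcomp_j : HasDerivAt (fun ζ => γ ζ j) (v j) 0 := by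
      have hproj := (ContinuousLinearMap.proj (R := ℂ) (φ := fun _ : Fin n => ℂ) j).hasFDerivAt
        (x := γ 0)
      exact hproj.comp_hasDerivAt 0 hγder
    rw [hvj j hj] at hcomp_j
    have hL : HasFDerivAt (fun ζ => γ ζ j) (0 : ℂ →L[ℂ] ℂ) 0 := by
      have := hasDerivAt_iff_hasFDerivAt.1 hcomp_j
      have hz : ContinuousLinearMap.toSpanSingleton ℂ (0:ℂ) = 0 := by
        refine ContinuousLinearMap.ext fun ζ => ?_
        simp
      rwa [hz] at this
    have hana : AnalyticAt ℂ (fun ζ => γ ζ j) 0 := by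
      exact ((ContinuousLinearMap.proj (R := ℂ) (φ := fun _ : Fin n => ℂ) j).analyticAt
        (γ 0)).comp hγa
    have h0 : (fun ζ => γ ζ j) 0 = 0 := by show γ 0 j = 0; rw [hγ0]; rfl
    have := isBigO_sub_linear hana h0 hL
    refine this.congr' ?_ EventuallyEq.rfl
    filter_upwards with ζ
    simp

lemma construct_curve (e : Fin n) {ν : Fin n → ℂ} (hν1 : ∀ j, j ≠ e → ν j ≠ 1)
    {Φ : (Fin n → ℂ) → (Fin n → ℂ)} (hΦa : AnalyticAt ℂ Φ 0) (hΦ0 : Φ 0 = 0)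
    (hΦd : HasFDerivAt Φ (diagCLM ν) 0) :
    ∃ γ : ℂ → (Fin n → ℂ), AnalyticAt ℂ γ 0 ∧ γ 0 = 0 ∧
      (∀ᶠ ζ in 𝓝 (0:ℂ), γ ζ e = ζ ∧ ∀ j, j ≠ e → Φ (γ ζ) j = γ ζ j) := by
  classical
  have hΦ2 : (fun z => Φ z - diagCLM ν z) =O[𝓝 0] fun z : Fin n → ℂ => ‖z‖^2 :=
    isBigO_sub_linear hΦa hΦ0 hΦd
  set d : Fin n → ℂ := fun j => if j = e then 1 else ν j - 1 with hd
  have hdne : ∀ j, d j ≠ 0 := by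
    intro j
    rw [hd]
    by_cases hj : j = e
    · simp [hj]
    · simp only [if_neg hj]
      intro hcon
      exact hν1 j hj (by linear_combination hcon)
  set Θ : (Fin n → ℂ) → (Fin n → ℂ) := fun z => fun j => if j = e then z e else Φ z j - z j
    with hΘ
  have hΘa : AnalyticAt ℂ Θ 0 := by
    rw [analyticAt_pi_iff]
    intro j
    by_cases hj : j = e
    · simp only [hΘ, hj, if_true]
      exact (ContinuousLinearMap.proj (R := ℂ) (φ := fun _ : Fin n => ℂ) e).analyticAt 0
    · simp only [hΘ, hj, if_false]
      exact (((ContinuousLinearMap.proj (R := ℂ) (φ := fun _ : Fin n => ℂ) j).analyticAt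
        (Φ 0)).comp hΦa).sub
        ((ContinuousLinearMap.proj (R := ℂ) (φ := fun _ : Fin n => ℂ) j).analyticAt 0)
  have hΘ0 : Θ 0 = 0 := by
    funext j
    simp only [hΘ]
    by_cases hj : j = e
    · simp [hj]
    · simp [hj, hΦ0]
  have hΘd : HasFDerivAt Θ ((diagCLE d hdne : (Fin n → ℂ) →L[ℂ] (Fin n → ℂ))) 0 := by
    apply hasFDerivAt_of_isBigO_sq hΘ0
    rw [isBigO_pi]
    intro j
    by_cases hj : j = e
    · have hzero : (fun z : Fin n → ℂ =>
          (Θ z - (diagCLE d hdne : (Fin n → ℂ) →L[ℂ] (Fin n → ℂ)) z) j) = fun _ => 0 := by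
        funext z
        have h1 : Θ z j = z e := by simp [hΘ, hj]
        have h2 : ((diagCLE d hdne : (Fin n → ℂ) →L[ℂ] (Fin n → ℂ)) z) j = z e := by
          have := diagCLE_clm_apply d hdne z j
          rw [hj] at this ⊢
          rw [this]
          simp [hd]
        simp only [Pi.sub_apply, h1, h2, sub_self]
      rw [hzero]
      exact isBigO_zero _ _
    · have heq : (fun z : Fin n → ℂ =>
          (Θ z - (diagCLE d hdne : (Fin n → ℂ) →L[ℂ] (Fin n → ℂ)) z) j)
          = fun z => (Φ z - diagCLM ν z) j := by
        funext z
        have h1 : Θ z j = Φ z j - z j := by simp [hΘ, hj]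
        have h2 : ((diagCLE d hdne : (Fin n → ℂ) →L[ℂ] (Fin n → ℂ)) z) j
            = (ν j - 1) * z j := by
          have := diagCLE_clm_apply d hdne z j
          rw [this]
          simp [hd, hj]
        simp only [Pi.sub_apply, h1, h2, diagCLM_apply]
        ring
      rw [heq]
      exact component_isBigO hΦ2 j
  obtain ⟨σ, hσa, hσ0, hleft, hright⟩ := local_inverse hΘa hΘ0 hΘd
  set u : Fin n → ℂ := Pi.single e 1 with hu
  refine ⟨fun ζ => σ (ζ • u), ?_, ?_, ?_⟩
  · have hlin : AnalyticAt ℂ (fun ζ : ℂ => ζ • u) 0 := by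
      have := (ContinuousLinearMap.smulRight (ContinuousLinearMap.id ℂ ℂ) u).analyticAt (0:ℂ)
      exact this
    have hσa' : AnalyticAt ℂ σ ((0:ℂ) • u) := by rwa [zero_smul]
    exact AnalyticAt.comp (g := σ) (f := fun ζ : ℂ => ζ • u) (x := (0:ℂ)) hσa' hlin
  · show σ ((0:ℂ) • u) = 0
    rw [zero_smul, hσ0]
  · have hlint : Tendsto (fun ζ : ℂ => ζ • u) (𝓝 0) (𝓝 0) := by
      have : Tendsto (fun ζ : ℂ => ζ • u) (𝓝 0) (𝓝 ((0:ℂ) • u)) :=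
        Continuous.tendsto (continuous_id.smul continuous_const) 0
      rwa [zero_smul] at this
    filter_upwards [hlint.eventually hright] with ζ hζ
    have he : Θ (σ (ζ • u)) = ζ • u := hζ
    constructor
    · have := congrFun he e
      simp only [hΘ, if_pos rfl] at this
      rw [this]
      simp [hu]
    · intro j hj
      have := congrFun he j
      simp only [hΘ, if_neg hj] at this
      rw [Pi.smul_apply, hu, Pi.single_apply, if_neg hj] at this
      have h2 : Φ (σ (ζ • u)) j - σ (ζ • u) j = 0 := by
        rw [this]; simp
      linear_combination h2


lemma mpr_dir (hn : 0 < n) (lam : Fin n → ℂ)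
    (F : (Fin n → ℂ) → (Fin n → ℂ))
    (hF : AnalyticAt ℂ F 0) (hF0 : F 0 = 0)
    (hdiag : ∀ j : Fin n,
      (fun z : Fin n → ℂ => F z j - lam j * z j) =O[𝓝 0] fun z : Fin n → ℂ => ‖z‖ ^ 2)
    (q : ℕ) (hq : 0 < q)
    (hq1 : lam ⟨0, hn⟩ ^ q = 1)
    (hsmall : ∀ j : Fin n, j ≠ ⟨0, hn⟩ → ‖lam j‖ < 1)
    (γ : ℂ → (Fin n → ℂ)) (hγa : AnalyticAt ℂ γ 0) (hγ0 : γ 0 = 0)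
    (hγd : deriv γ 0 ≠ 0)
    (hγfix : ∀ᶠ ζ in 𝓝 (0 : ℂ), F^[q] (γ ζ) = γ ζ)
    (t : ℕ) :
    ∃ Ψ G : (Fin n → ℂ) → (Fin n → ℂ),
        AnalyticAt ℂ Ψ 0 ∧ Ψ 0 = 0 ∧
        ((fun z : Fin n → ℂ => Ψ z - z) =O[𝓝 0] fun z : Fin n → ℂ => ‖z‖ ^ 2) ∧
        AnalyticAt ℂ G 0 ∧ (∀ᶠ z in 𝓝 (0 : Fin n → ℂ), Ψ (F z) = G (Ψ z)) ∧
        ((fun z : Fin n → ℂ => G z ⟨0, hn⟩ - lam ⟨0, hn⟩ * z ⟨0, hn⟩)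
          =O[𝓝 0] fun z : Fin n → ℂ => ‖z‖ ^ t) := by
  classical
  set e : Fin n := ⟨0, hn⟩ with he
  have hFd : HasFDerivAt F (diagCLM lam) 0 := by
    apply hasFDerivAt_of_isBigO_sq hF0
    rw [isBigO_pi]
    intro j
    exact (hdiag j).congr' (by filter_upwards with z; rfl) EventuallyEq.rfl
  set ν : Fin n → ℂ := fun j => lam j ^ q with hν
  set Φ := F^[q] with hΦ
  have hΦa : AnalyticAt ℂ Φ 0 := iterate_analyticAt hF hF0 q
  have hΦ0 : Φ 0 = 0 := iterate_fixed hF0 q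
  have hΦd : HasFDerivAt Φ (diagCLM ν) 0 := iterate_hasFDerivAt hF0 hFd q
  have hνe : ν e = 1 := hq1
  have hνabs : ∀ j, j ≠ e → ‖ν j‖ < 1 := by
    intro j hj
    have : ‖ν j‖ = ‖lam j‖ ^ q := by
      rw [hν]; simp [map_pow]
    rw [this]
    exact pow_lt_one₀ (norm_nonneg _) (hsmall j hj) hq.ne'
  have hν1 : ∀ j, j ≠ e → ν j ≠ 1 := by
    intro j hj hcon
    have := hνabs j hj
    rw [hcon] at this
    simp at this
  obtain ⟨c, hc, hγe, hγj⟩ := curve_tangent e hν1 hΦd hγa hγ0 hγd hγfix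
  set t' := max t 2 with ht'
  obtain ⟨r, hra, hr0, hre, hrE⟩ :=
    exists_r e ν hνe hνabs hΦa hΦ0 hΦd hγa hγ0 hγfix hc hγe hγj t' (le_max_right _ _)
  have hlam_ne : lam e ≠ 0 := by
    intro h
    rw [h] at hq1
    simp [zero_pow hq.ne'] at hq1
  set μ : ℂ := (lam e)⁻¹ with hμ
  have hlam_mu : lam e * μ = 1 := mul_inv_cancel₀ hlam_ne
  have hμq : μ ^ q = 1 := by rw [hμ, inv_pow, hq1, inv_one]
  have hqC : (q:ℂ) ≠ 0 := Nat.cast_ne_zero.mpr hq.ne'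
  set rt : (Fin n → ℂ) → ℂ :=
    fun z => (q:ℂ)⁻¹ * ∑ j ∈ Finset.range q, μ ^ j * r (F^[j] z) with hrt
  have hrteq : ∀ z, rt (F z) = lam e * rt z + lam e * (q:ℂ)⁻¹ * (r (Φ z) - r z) := by
    intro z
    have h1 : μ * (∑ j ∈ Finset.range q, μ ^ j * r (F^[j+1] z))
        = (∑ j ∈ Finset.range q, μ ^ j * r (F^[j] z)) + r (Φ z) - r z := by
      rw [Finset.mul_sum]
      have hterm : ∀ j ∈ Finset.range q,
          μ * (μ ^ j * r (F^[j+1] z)) = μ^(j+1) * r (F^[j+1] z) := by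
        intro j _; ring
      rw [Finset.sum_congr rfl hterm]
      have h2 := Finset.sum_range_succ' (fun i => μ ^ i * r (F^[i] z)) q
      have h3 := Finset.sum_range_succ (fun i => μ ^ i * r (F^[i] z)) q
      rw [hμq] at h3
      have h4 : F^[0] z = z := rfl
      rw [h4] at h2
      have h5 : Φ z = F^[q] z := rfl
      rw [h5]
      linear_combination h3 - h2
    have hLHS : rt (F z) = (q:ℂ)⁻¹ * ∑ j ∈ Finset.range q, μ ^ j * r (F^[j+1] z) := rfl
    rw [hLHS]
    calc (q:ℂ)⁻¹ * ∑ j ∈ Finset.range q, μ ^ j * r (F^[j+1] z)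
        = (q:ℂ)⁻¹ * ((lam e * μ) * ∑ j ∈ Finset.range q, μ ^ j * r (F^[j+1] z)) := by
          rw [hlam_mu]; ring
      _ = (q:ℂ)⁻¹ * (lam e * (μ * ∑ j ∈ Finset.range q, μ ^ j * r (F^[j+1] z))) := by ring
      _ = (q:ℂ)⁻¹ * (lam e * ((∑ j ∈ Finset.range q, μ ^ j * r (F^[j] z)) + r (Φ z) - r z)) := by
          rw [h1]
      _ = lam e * rt z + lam e * (q:ℂ)⁻¹ * (r (Φ z) - r z) := by
          rw [hrt]; simp only []; ring
  have hrta : AnalyticAt ℂ rt 0 := by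
    apply AnalyticAt.mul analyticAt_const
    apply Finset.analyticAt_fun_sum
    intro j _
    apply AnalyticAt.mul analyticAt_const
    have h1 : AnalyticAt ℂ r (F^[j] 0) := by rwa [iterate_fixed hF0]
    exact h1.comp (iterate_analyticAt hF hF0 j)
  have hrt0 : rt 0 = 0 := by
    rw [hrt]
    simp only []
    have : ∀ j ∈ Finset.range q, μ ^ j * r (F^[j] 0) = 0 := by
      intro j _
      rw [iterate_fixed hF0, hr0, mul_zero]
    rw [Finset.sum_congr rfl this]
    simp
  have hrtO2 : (fun z => rt z - z e) =O[𝓝 0] fun z : Fin n → ℂ => ‖z‖^2 := by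
    have hgj : ∀ j : ℕ, (fun z : Fin n → ℂ => r (F^[j] z) - (lam e)^j * z e)
        =O[𝓝 0] fun z : Fin n → ℂ => ‖z‖^2 := by
      intro j
      have hpart1 : (fun z : Fin n → ℂ => r (F^[j] z) - (F^[j] z) e)
          =O[𝓝 0] fun z : Fin n → ℂ => ‖z‖^2 :=
        isBigO_comp_pow hre (iterate_analyticAt hF hF0 j) (iterate_fixed hF0 j)
      have hpart2 : (fun z : Fin n → ℂ => (F^[j] z) e - (lam e)^j * z e)
          =O[𝓝 0] fun z : Fin n → ℂ => ‖z‖^2 := by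
        have hd2 := isBigO_sub_linear (iterate_analyticAt hF hF0 j) (iterate_fixed hF0 j)
          (iterate_hasFDerivAt hF0 hFd j)
        have hcomp := component_isBigO hd2 e
        exact hcomp.congr' (by filter_upwards with z; rfl) EventuallyEq.rfl
      have := hpart1.add hpart2
      exact this.congr' (by filter_upwards with z; ring_nf) EventuallyEq.rfl
    have hsum : (fun z : Fin n → ℂ =>
        ∑ j ∈ Finset.range q, μ^j * (r (F^[j] z) - (lam e)^j * z e))
        =O[𝓝 0] fun z : Fin n → ℂ => ‖z‖^2 :=
      IsBigO.fun_sum (fun j _ => (hgj j).const_mul_left _)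
    have heq : ∀ z : Fin n → ℂ, rt z - z e
        = (q:ℂ)⁻¹ * ∑ j ∈ Finset.range q, μ^j * (r (F^[j] z) - (lam e)^j * z e) := by
      intro z
      have h6 : ∀ j ∈ Finset.range q,
          μ^j * (r (F^[j] z) - (lam e)^j * z e) = μ^j * r (F^[j] z) - z e := by
        intro j _
        have h7 : μ^j * (lam e)^j = 1 := by
          rw [← mul_pow, hμ, inv_mul_cancel₀ hlam_ne, one_pow]
        calc μ^j * (r (F^[j] z) - (lam e)^j * z e)
            = μ^j * r (F^[j] z) - (μ^j * (lam e)^j) * z e := by ring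
          _ = μ^j * r (F^[j] z) - z e := by rw [h7]; ring
      rw [Finset.sum_congr rfl h6, Finset.sum_sub_distrib, Finset.sum_const,
        Finset.card_range]
      rw [hrt]
      simp only [nsmul_eq_mul]
      field_simp
    have hconst := hsum.const_mul_left ((q:ℂ)⁻¹)
    refine hconst.congr' ?_ EventuallyEq.rfl
    filter_upwards with z
    exact (heq z).symm
  set Ψ : (Fin n → ℂ) → (Fin n → ℂ) := fun z => fun j => if j = e then rt z else z j
    with hΨdef
  have hΨa : AnalyticAt ℂ Ψ 0 := by
    rw [analyticAt_pi_iff]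
    intro j
    by_cases hj : j = e
    · simp only [hΨdef, hj, if_true]
      exact hrta
    · simp only [hΨdef, hj, if_false]
      exact (ContinuousLinearMap.proj (R := ℂ) (φ := fun _ : Fin n => ℂ) j).analyticAt 0
  have hΨ0 : Ψ 0 = 0 := by
    funext j
    by_cases hj : j = e <;> simp [hΨdef, hj, hrt0]
  have hΨsub : (fun z => Ψ z - z) =O[𝓝 0] fun z : Fin n → ℂ => ‖z‖^2 := by
    rw [isBigO_pi]
    intro j
    by_cases hj : j = e
    · refine hrtO2.congr' ?_ EventuallyEq.rfl
      filter_upwards with z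
      simp [hΨdef, hj]
    · have : (fun z : Fin n → ℂ => (Ψ z - z) j) = fun _ => (0:ℂ) := by
        funext z
        simp [hΨdef, hj]
      rw [this]
      exact isBigO_zero _ _
  have hΨd : HasFDerivAt Ψ
      ((ContinuousLinearEquiv.refl ℂ (Fin n → ℂ) : (Fin n → ℂ) →L[ℂ] (Fin n → ℂ))) 0 := by
    apply hasFDerivAt_of_isBigO_sq hΨ0
    refine hΨsub.congr' ?_ EventuallyEq.rfl
    filter_upwards with z
    rfl
  obtain ⟨σ, hσa, hσ0, hleft, hright⟩ := local_inverse hΨa hΨ0 hΨd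
  set G : (Fin n → ℂ) → (Fin n → ℂ) := fun w => Ψ (F (σ w)) with hGdef
  have hGa : AnalyticAt ℂ G 0 := by
    have h1 : AnalyticAt ℂ F (σ 0) := by rwa [hσ0]
    have h2 : AnalyticAt ℂ Ψ (F (σ 0)) := by rw [hσ0, hF0]; exact hΨa
    exact AnalyticAt.comp (g := Ψ) (f := fun w => F (σ w)) h2
      (AnalyticAt.comp (g := F) (f := σ) h1 hσa)
  have hconj : ∀ᶠ z in 𝓝 (0 : Fin n → ℂ), Ψ (F z) = G (Ψ z) := by
    filter_upwards [hleft] with z hz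
    rw [hGdef]
    simp only []
    rw [hz]
  have hGe : (fun w : Fin n → ℂ => G w e - lam e * w e) =O[𝓝 0]
      fun w : Fin n → ℂ => ‖w‖ ^ t' := by
    have hEσ : (fun w : Fin n → ℂ => (r (Φ (σ w)) - r (σ w))) =O[𝓝 0]
        fun w : Fin n → ℂ => ‖w‖ ^ t' :=
      isBigO_comp_pow hrE hσa hσ0
    have heq2 : ∀ᶠ w in 𝓝 (0 : Fin n → ℂ), G w e - lam e * w e
        = lam e * (q:ℂ)⁻¹ * (r (Φ (σ w)) - r (σ w)) := by
      filter_upwards [hright] with w hw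
      have h1 : G w e = rt (F (σ w)) := by
        rw [hGdef]
        simp only [hΨdef, if_pos rfl]
      have h2 : w e = rt (σ w) := by
        conv_lhs => rw [← hw]
        simp only [hΨdef, if_pos rfl]
      rw [h1, h2, hrteq (σ w)]
      ring
    refine (hEσ.const_mul_left (lam e * (q:ℂ)⁻¹)).congr' ?_ EventuallyEq.rfl
    filter_upwards [heq2] with w hw
    exact hw.symm
  exact ⟨Ψ, G, hΨa, hΨ0, hΨsub, hGa, hconj, isBigO_pow_weaken (le_max_left t 2) hGe⟩


lemma mp_dir (hn : 0 < n) (lam : Fin n → ℂ)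
    (F : (Fin n → ℂ) → (Fin n → ℂ))
    (hF : AnalyticAt ℂ F 0) (hF0 : F 0 = 0)
    (hdiag : ∀ j : Fin n,
      (fun z : Fin n → ℂ => F z j - lam j * z j) =O[𝓝 0] fun z : Fin n → ℂ => ‖z‖ ^ 2)
    (q : ℕ) (hq : 0 < q)
    (hq1 : lam ⟨0, hn⟩ ^ q = 1)
    (hsmall : ∀ j : Fin n, j ≠ ⟨0, hn⟩ → ‖lam j‖ < 1)
    (H : ∀ t : ℕ, ∃ Ψ G : (Fin n → ℂ) → (Fin n → ℂ),
        AnalyticAt ℂ Ψ 0 ∧ Ψ 0 = 0 ∧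
        ((fun z : Fin n → ℂ => Ψ z - z) =O[𝓝 0] fun z : Fin n → ℂ => ‖z‖ ^ 2) ∧
        AnalyticAt ℂ G 0 ∧ (∀ᶠ z in 𝓝 (0 : Fin n → ℂ), Ψ (F z) = G (Ψ z)) ∧
        ((fun z : Fin n → ℂ => G z ⟨0, hn⟩ - lam ⟨0, hn⟩ * z ⟨0, hn⟩)
          =O[𝓝 0] fun z : Fin n → ℂ => ‖z‖ ^ t)) :
    ∃ γ : ℂ → (Fin n → ℂ),
        AnalyticAt ℂ γ 0 ∧ γ 0 = 0 ∧ deriv γ 0 ≠ 0 ∧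
        (∃ s ∈ 𝓝 (0 : ℂ), Set.InjOn γ s) ∧
        ∀ᶠ ζ in 𝓝 (0 : ℂ), F^[q] (γ ζ) = γ ζ := by
  classical
  set e : Fin n := ⟨0, hn⟩ with he
  have hFd : HasFDerivAt F (diagCLM lam) 0 := by
    apply hasFDerivAt_of_isBigO_sq hF0
    rw [isBigO_pi]
    intro j
    exact (hdiag j).congr' (by filter_upwards with z; rfl) EventuallyEq.rfl
  set ν : Fin n → ℂ := fun j => lam j ^ q with hν
  set Φ := F^[q] with hΦ
  have hΦa : AnalyticAt ℂ Φ 0 := iterate_analyticAt hF hF0 q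
  have hΦ0 : Φ 0 = 0 := iterate_fixed hF0 q
  have hΦd : HasFDerivAt Φ (diagCLM ν) 0 := iterate_hasFDerivAt hF0 hFd q
  have hνabs : ∀ j, j ≠ e → ‖ν j‖ < 1 := by
    intro j hj
    have h1 : ‖ν j‖ = ‖lam j‖ ^ q := by
      rw [hν]; simp [map_pow]
    rw [h1]
    exact pow_lt_one₀ (norm_nonneg _) (hsmall j hj) hq.ne'
  have hν1 : ∀ j, j ≠ e → ν j ≠ 1 := by
    intro j hj hcon
    have := hνabs j hj
    rw [hcon] at this
    simp at this
  have hlam_norm : ‖lam e‖ = 1 := by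
    have h1 : ‖lam e‖ ^ q = 1 := by
      rw [← norm_pow, hq1, norm_one]
    have h0 : (0:ℝ) ≤ ‖lam e‖ := norm_nonneg _
    rcases lt_trichotomy (‖lam e‖) 1 with h | h | h
    · exfalso
      have := pow_lt_one₀ h0 h hq.ne'
      rw [h1] at this
      exact lt_irrefl _ this
    · exact h
    · exfalso
      have := one_lt_pow₀ h hq.ne'
      rw [h1] at this
      exact lt_irrefl _ this
  obtain ⟨γ, hγa, hγ0, hγev⟩ := construct_curve e hν1 hΦa hΦ0 hΦd
  have hγt : Tendsto γ (𝓝 0) (𝓝 0) := by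
    have := hγa.continuousAt.tendsto
    rwa [hγ0] at this
  set u : Fin n → ℂ := Pi.single e 1 with hu
  have hu_norm : ‖u‖ = 1 := by
    rw [hu, Pi.norm_single, norm_one]
  set g : ℂ → ℂ := fun ζ => Φ (γ ζ) e - ζ with hg
  have hga : AnalyticAt ℂ g 0 := by
    have h1 : AnalyticAt ℂ Φ (γ 0) := by rwa [hγ0]
    have h2 : AnalyticAt ℂ (fun ζ => Φ (γ ζ) e) 0 := by
      have h3 := ((ContinuousLinearMap.proj (R := ℂ) (φ := fun _ : Fin n => ℂ) e).analyticAt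
        (Φ (γ 0)))
      exact AnalyticAt.comp (g := fun z : Fin n → ℂ => z e) (f := fun ζ => Φ (γ ζ)) h3
        (AnalyticAt.comp (g := Φ) (f := γ) h1 hγa)
    exact h2.sub analyticAt_id
  have hgO : ∀ T : ℕ, g =O[𝓝 0] fun ζ : ℂ => ‖ζ‖ ^ T := by
    intro T
    obtain ⟨Ψ, G, hΨa, hΨ0, hΨsub, hGa, hconj, hGe⟩ := H T
    have hG0 : G 0 = 0 := by
      have h0 := hconj.self_of_nhds
      rw [hF0, hΨ0] at h0
      exact h0.symm
    have hΨt : Tendsto Ψ (𝓝 0) (𝓝 0) := by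
      have := hΨa.continuousAt.tendsto
      rwa [hΨ0] at this
    have hconj_iter : ∀ m : ℕ, ∀ᶠ z in 𝓝 (0 : Fin n → ℂ), Ψ (F^[m] z) = G^[m] (Ψ z) := by
      intro m
      induction m with
      | zero => filter_upwards with z; rfl
      | succ m ih =>
        have hFmt : Tendsto (F^[m]) (𝓝 0) (𝓝 0) := by
          have := (iterate_analyticAt hF hF0 m).continuousAt.tendsto
          rwa [iterate_fixed hF0 m] at this
        filter_upwards [ih, hFmt.eventually hconj] with z h1 h2
        rw [Function.iterate_succ_apply', Function.iterate_succ_apply']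
        rw [h2, h1]
    obtain ⟨CG, hCGpos, hCG⟩ := (isBigO_norm_of_fixed hGa hG0).exists_pos
    rw [IsBigOWith] at hCG
    obtain ⟨C0, hC0pos, hC0⟩ := hGe.exists_pos
    rw [IsBigOWith] at hC0
    have hGit : ∀ m : ℕ, ∃ C : ℝ, 0 < C ∧ ∀ᶠ w in 𝓝 (0 : Fin n → ℂ),
        ‖G^[m] w‖ ≤ C * ‖w‖ ∧ ‖(G^[m] w) e - (lam e)^m * w e‖ ≤ C * ‖w‖^T := by
      intro m
      induction m with
      | zero =>
        refine ⟨1, one_pos, ?_⟩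
        filter_upwards with w
        constructor
        · simp
        · simp only [Function.iterate_zero, id_eq, pow_zero, one_mul, sub_self, norm_zero,
            one_mul]
          positivity
      | succ m ih =>
        obtain ⟨C, hCpos, hC⟩ := ih
        have hGmt : Tendsto (G^[m]) (𝓝 0) (𝓝 0) := by
          have := (iterate_analyticAt hGa hG0 m).continuousAt.tendsto
          rwa [iterate_fixed hG0 m] at this
        refine ⟨CG * C + C0 * C^T + C, by positivity, ?_⟩
        filter_upwards [hC, hGmt.eventually hCG, hGmt.eventually hC0] with w h1 h2 h3
        have hsucc : G^[m+1] w = G (G^[m] w) := Function.iterate_succ_apply' G m w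
        have hb1 : ‖G^[m] w‖ ≤ C * ‖w‖ := h1.1
        have hb2 : ‖(G^[m] w) e - (lam e)^m * w e‖ ≤ C * ‖w‖^T := h1.2
        have h2' : ‖G (G^[m] w)‖ ≤ CG * ‖G^[m] w‖ := by
          calc ‖G (G^[m] w)‖ ≤ CG * ‖‖G^[m] w‖‖ := h2
            _ = CG * ‖G^[m] w‖ := by rw [norm_norm]
        have h3' : ‖G (G^[m] w) e - lam e * (G^[m] w) e‖ ≤ C0 * ‖G^[m] w‖^T := by
          calc ‖G (G^[m] w) e - lam e * (G^[m] w) e‖ ≤ C0 * ‖‖G^[m] w‖^T‖ := h3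
            _ = C0 * ‖G^[m] w‖^T := by rw [Real.norm_of_nonneg (by positivity)]
        constructor
        · rw [hsucc]
          calc ‖G (G^[m] w)‖ ≤ CG * ‖G^[m] w‖ := h2'
            _ ≤ CG * (C * ‖w‖) := mul_le_mul_of_nonneg_left hb1 (le_of_lt hCGpos)
            _ = (CG * C) * ‖w‖ := by ring
            _ ≤ (CG * C + C0 * C^T + C) * ‖w‖ := by
                apply mul_le_mul_of_nonneg_right ?_ (norm_nonneg _)
                nlinarith [pow_pos hCpos T]
        · rw [hsucc]
          have hdecomp : G (G^[m] w) e - (lam e)^(m+1) * w e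
              = (G (G^[m] w) e - lam e * (G^[m] w) e)
                + lam e * ((G^[m] w) e - (lam e)^m * w e) := by
            rw [pow_succ']
            ring
          rw [hdecomp]
          calc ‖(G (G^[m] w) e - lam e * (G^[m] w) e)
                + lam e * ((G^[m] w) e - (lam e)^m * w e)‖
              ≤ ‖G (G^[m] w) e - lam e * (G^[m] w) e‖
                + ‖lam e * ((G^[m] w) e - (lam e)^m * w e)‖ := norm_add_le _ _
            _ ≤ C0 * ‖G^[m] w‖^T + 1 * (C * ‖w‖^T) := by
                apply add_le_add h3'
                rw [norm_mul, hlam_norm]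
                exact mul_le_mul_of_nonneg_left hb2 (by norm_num)
            _ ≤ C0 * (C * ‖w‖)^T + 1 * (C * ‖w‖^T) := by
                apply add_le_add ?_ (le_refl _)
                apply mul_le_mul_of_nonneg_left ?_ (le_of_lt hC0pos)
                exact pow_le_pow_left₀ (norm_nonneg _) hb1 T
            _ = (C0 * C^T + C) * ‖w‖^T := by rw [mul_pow]; ring
            _ ≤ (CG * C + C0 * C^T + C) * ‖w‖^T := by
                apply mul_le_mul_of_nonneg_right ?_ (by positivity)
                nlinarith
    set σψ : (Fin n → ℂ) → (Fin n → ℂ) := fun z => Ψ z - z with hσψ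
    have hσψa : AnalyticAt ℂ σψ 0 := hΨa.sub analyticAt_id
    obtain ⟨ρ, hρpos, hρ⟩ := lipschitz_small hσψa hΨsub (by norm_num : (0:ℝ) < 1/2)
    obtain ⟨CΨ, hCΨpos, hCΨ⟩ := (isBigO_norm_of_fixed hΨa hΨ0).exists_pos
    rw [IsBigOWith] at hCΨ
    obtain ⟨Kγ, hKγpos, hKγ⟩ := (isBigO_norm_of_fixed hγa hγ0).exists_pos
    rw [IsBigOWith] at hKγ
    obtain ⟨Cq, hCqpos, hCq⟩ := hGit q
    have hΦγt : Tendsto (fun ζ => Φ (γ ζ)) (𝓝 0) (𝓝 0) := by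
      have h1 : Tendsto Φ (𝓝 0) (𝓝 0) := by
        have := hΦa.continuousAt.tendsto
        rwa [hΦ0] at this
      exact h1.comp hγt
    have hball : ∀ᶠ x in 𝓝 (0 : Fin n → ℂ), x ∈ Metric.ball (0 : Fin n → ℂ) ρ := by
      filter_upwards [Metric.ball_mem_nhds (0 : Fin n → ℂ) hρpos] with x hx
      exact hx
    apply IsBigO.of_bound (2 * (Cq * (CΨ * Kγ)^T))
    filter_upwards [hγev, hγt.eventually (hconj_iter q), hγt.eventually hball,
      hΦγt.eventually hball, (hΨt.comp hγt).eventually hCq, hγt.eventually hCΨ, hKγ]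
      with ζ h1 h2 h3 h4 h5 h6 h7
    have hae : γ ζ e = ζ := h1.1
    have ha' : Φ (γ ζ) = γ ζ + g ζ • u := by
      funext j
      by_cases hj : j = e
      · rw [hj]
        simp only [Pi.add_apply, Pi.smul_apply, hu, Pi.single_eq_same, smul_eq_mul, mul_one]
        rw [hae, hg]
        simp only []
        ring
      · rw [Pi.add_apply, Pi.smul_apply, hu, Pi.single_apply, if_neg hj]
        rw [h1.2 j hj]
        simp
    have hw_bound : ‖Ψ (γ ζ)‖ ≤ CΨ * Kγ * ‖ζ‖ := by
      have hb1 : ‖Ψ (γ ζ)‖ ≤ CΨ * ‖γ ζ‖ := by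
        calc ‖Ψ (γ ζ)‖ ≤ CΨ * ‖‖γ ζ‖‖ := h6
          _ = CΨ * ‖γ ζ‖ := by rw [norm_norm]
      have hb2 : ‖γ ζ‖ ≤ Kγ * ‖ζ‖ := by
        calc ‖γ ζ‖ ≤ Kγ * ‖‖ζ‖‖ := h7
          _ = Kγ * ‖ζ‖ := by rw [norm_norm]
      calc ‖Ψ (γ ζ)‖ ≤ CΨ * ‖γ ζ‖ := hb1
        _ ≤ CΨ * (Kγ * ‖ζ‖) := mul_le_mul_of_nonneg_left hb2 (le_of_lt hCΨpos)
        _ = CΨ * Kγ * ‖ζ‖ := by ring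
    have hkey : Ψ (Φ (γ ζ)) - Ψ (γ ζ) = g ζ • u + (σψ (Φ (γ ζ)) - σψ (γ ζ)) := by
      have e1 : Ψ (Φ (γ ζ)) = σψ (Φ (γ ζ)) + Φ (γ ζ) := by
        rw [hσψ]; simp only []; abel
      have e2 : Ψ (γ ζ) = σψ (γ ζ) + γ ζ := by
        rw [hσψ]; simp only []; abel
      rw [e1, e2]
      rw [ha']
      abel
    have hlip : ‖σψ (Φ (γ ζ)) - σψ (γ ζ)‖ ≤ (1/2) * ‖Φ (γ ζ) - γ ζ‖ :=
      hρ _ h4 _ h3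
    have hau : ‖Φ (γ ζ) - γ ζ‖ = ‖g ζ‖ := by
      rw [ha']
      have : γ ζ + g ζ • u - γ ζ = g ζ • u := by abel
      rw [this, norm_smul, hu_norm, mul_one]
    have hGqbound : ‖(G^[q] (Ψ (γ ζ))) e - (Ψ (γ ζ)) e‖ ≤ Cq * ‖Ψ (γ ζ)‖^T := by
      have hbd := h5.2
      rw [hq1, one_mul] at hbd
      exact hbd
    have hcomp_e : (Ψ (Φ (γ ζ)) - Ψ (γ ζ)) e = g ζ + (σψ (Φ (γ ζ)) - σψ (γ ζ)) e := by
      rw [hkey]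
      simp only [Pi.add_apply, Pi.smul_apply, hu, Pi.single_eq_same, smul_eq_mul, mul_one]
    have hLHSe : (Ψ (Φ (γ ζ)) - Ψ (γ ζ)) e = (G^[q] (Ψ (γ ζ))) e - (Ψ (γ ζ)) e := by
      rw [Pi.sub_apply, h2]
    have h8 : ‖g ζ‖ ≤ Cq * ‖Ψ (γ ζ)‖^T + (1/2) * ‖g ζ‖ := by
      have h9 : g ζ = (Ψ (Φ (γ ζ)) - Ψ (γ ζ)) e - (σψ (Φ (γ ζ)) - σψ (γ ζ)) e := by
        rw [hcomp_e]; ring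
      calc ‖g ζ‖ = ‖(Ψ (Φ (γ ζ)) - Ψ (γ ζ)) e - (σψ (Φ (γ ζ)) - σψ (γ ζ)) e‖ := by rw [← h9]
        _ ≤ ‖(Ψ (Φ (γ ζ)) - Ψ (γ ζ)) e‖ + ‖(σψ (Φ (γ ζ)) - σψ (γ ζ)) e‖ := norm_sub_le _ _
        _ ≤ Cq * ‖Ψ (γ ζ)‖^T + (1/2) * ‖g ζ‖ := by
            apply add_le_add
            · rw [hLHSe]; exact hGqbound
            · calc ‖(σψ (Φ (γ ζ)) - σψ (γ ζ)) e‖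
                  ≤ ‖σψ (Φ (γ ζ)) - σψ (γ ζ)‖ := norm_le_pi_norm _ e
                _ ≤ (1/2) * ‖Φ (γ ζ) - γ ζ‖ := hlip
                _ = (1/2) * ‖g ζ‖ := by rw [hau]
    have h11 : ‖Ψ (γ ζ)‖^T ≤ (CΨ * Kγ)^T * ‖ζ‖^T := by
      calc ‖Ψ (γ ζ)‖^T ≤ (CΨ * Kγ * ‖ζ‖)^T :=
            pow_le_pow_left₀ (norm_nonneg _) hw_bound T
        _ = (CΨ * Kγ)^T * ‖ζ‖^T := by rw [mul_pow]
    calc ‖g ζ‖ ≤ 2 * (Cq * ‖Ψ (γ ζ)‖^T) := by linarith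
      _ ≤ 2 * (Cq * ((CΨ * Kγ)^T * ‖ζ‖^T)) := by
          apply mul_le_mul_of_nonneg_left ?_ (by norm_num)
          exact mul_le_mul_of_nonneg_left h11 (le_of_lt hCqpos)
      _ = (2 * (Cq * (CΨ * Kγ)^T)) * ‖‖ζ‖^T‖ := by
          rw [Real.norm_of_nonneg (by positivity)]
          ring
  have hgz : ∀ᶠ ζ in 𝓝 (0:ℂ), g ζ = 0 := eventually_zero_of_forall_isBigO hga hgO
  refine ⟨γ, hγa, hγ0, ?_, ?_, ?_⟩
  · have hγder : HasDerivAt γ (deriv γ 0) 0 := hγa.differentiableAt.hasDerivAt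
    have hγe_id : (fun ζ => γ ζ e) =ᶠ[𝓝 (0:ℂ)] id := by
      filter_upwards [hγev] with ζ h
      exact h.1
    have hder_e : HasDerivAt (fun ζ => γ ζ e) ((deriv γ 0) e) 0 := by
      have hproj := (ContinuousLinearMap.proj (R := ℂ) (φ := fun _ : Fin n => ℂ) e).hasFDerivAt
        (x := γ 0)
      exact hproj.comp_hasDerivAt 0 hγder
    have hder_id : HasDerivAt (fun ζ => γ ζ e) 1 0 := by
      apply (hasDerivAt_id (0:ℂ)).congr_of_eventuallyEq hγe_id
    have h1 : (deriv γ 0) e = 1 := hder_e.unique hder_id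
    intro hcon
    rw [hcon] at h1
    simp at h1
  · refine ⟨{ζ : ℂ | γ ζ e = ζ}, ?_, ?_⟩
    · exact Filter.eventually_iff.mp (hγev.mono fun ζ h => h.1)
    · intro a ha b hb hab
      have h1 : a = γ a e := ha.symm
      rw [h1, hab]
      exact hb
  · filter_upwards [hγev, hgz] with ζ h1 h2
    funext j
    by_cases hj : j = e
    · rw [hj]
      have h3 : Φ (γ ζ) e - ζ = 0 := h2
      have h4 : γ ζ e = ζ := h1.1
      rw [h4]
      linear_combination h3
    · exact h1.2 j hj

end FinDim

end SemiAttrAux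


open Asymptotics Topology Metric

/-- **Semi-attractive case (Corollary 6.1 (2)).**
Let `F ∈ Diff(ℂⁿ;0)` with eigenvalues `λ₁,…,λₙ` of `dF₀`.  Suppose `λ₁^q = 1` for a positive
integer `q`, `λ₁^l ≠ 1` for `l = 1,…,q-1`, and `|λ_j| < 1` for `j = 2,…,n`.  Then the order of
`F` with respect to `λ₁` is `k = ∞` — equivalently, `F` is formally linearizable in the first
component, formalized here order by order: for every `t` there is a change of coordinates
`Ψ(z) = z + O(|z|²)` conjugating `F` to a germ `G` with `G₁(z) = λ₁ z₁ + O(|z|^t)` — if and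
only if there exists a germ at `0` of a holomorphic non-singular curve through `0`
consisting of fixed points of `F^{∘q}`.  (Indices are 0-based: `z₁` is `z 0`.) -/
theorem semi_attractive_formally_linearizable_iff_fixed_curve
    (n : ℕ) (hn : 0 < n)
    (lam : Fin n → ℂ)
    (F : (Fin n → ℂ) → (Fin n → ℂ))
    (hF : AnalyticAt ℂ F 0) (hF0 : F 0 = 0)
    (hdiag : ∀ j : Fin n,
      (fun z : Fin n → ℂ => F z j - lam j * z j) =O[nhds 0] fun z : Fin n → ℂ => ‖z‖ ^ 2)
    (q : ℕ) (hq : 0 < q)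
    (hq1 : lam ⟨0, hn⟩ ^ q = 1)
    (hqmin : ∀ l : ℕ, 1 ≤ l → l < q → lam ⟨0, hn⟩ ^ l ≠ 1)
    (hsmall : ∀ j : Fin n, j ≠ ⟨0, hn⟩ → ‖lam j‖ < 1) :
    (∀ t : ℕ, ∃ Ψ G : (Fin n → ℂ) → (Fin n → ℂ),
        AnalyticAt ℂ Ψ 0 ∧ Ψ 0 = 0 ∧
        ((fun z : Fin n → ℂ => Ψ z - z) =O[nhds 0] fun z : Fin n → ℂ => ‖z‖ ^ 2) ∧
        AnalyticAt ℂ G 0 ∧ (∀ᶠ z in nhds (0 : Fin n → ℂ), Ψ (F z) = G (Ψ z)) ∧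
        ((fun z : Fin n → ℂ => G z ⟨0, hn⟩ - lam ⟨0, hn⟩ * z ⟨0, hn⟩)
          =O[nhds 0] fun z : Fin n → ℂ => ‖z‖ ^ t))
    ↔ (∃ γ : ℂ → (Fin n → ℂ),
        AnalyticAt ℂ γ 0 ∧ γ 0 = 0 ∧ deriv γ 0 ≠ 0 ∧
        (∃ s ∈ nhds (0 : ℂ), Set.InjOn γ s) ∧
        ∀ᶠ ζ in nhds (0 : ℂ), F^[q] (γ ζ) = γ ζ) := by
  constructor
  · intro H
    exact SemiAttrAux.mp_dir hn lam F hF hF0 hdiag q hq hq1 hsmall H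
  · rintro ⟨γ, hγa, hγ0, hγd, -, hγfix⟩
    intro t
    exact SemiAttrAux.mpr_dir hn lam F hF hF0 hdiag q hq hq1 hsmall γ hγa hγ0 hγd hγfix t
end

section
/- Let λ₁,…,λₙ be nonzero complex numbers and suppose there exists a multi-index α = (α₁,…,α_m,0,…,0) ≠ 0 ∈ ℕⁿ (1 ≤ m ≤ n) such that for each j ∈ {1,…,m}, the set of all l ∈ ℕⁿ with |l| ≥ 2 and λ_j = λ^l equals exactly {kα + e_j : k ≥ 1 integer} (the one-resonance condition with respect to {λ₁,…,λ_m}). Then λ_j ≠ λ_s for every j ∈ {1,…,m} and every s ∈ {1,…,n} with s ≠ j. -/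
/-- **One-resonance forces distinct eigenvalues (Remark 2.6).**
Let `λ₁, …, λₙ` be nonzero complex numbers and suppose there exists a multi-index
`α = (α₁,…,α_m,0,…,0) ≠ 0 ∈ ℕⁿ` (with `1 ≤ m ≤ n`) such that for each `j ∈ {1,…,m}`
the set of all `l ∈ ℕⁿ` with `|l| ≥ 2` and `λ_j = λ^l` equals exactly
`{kα + e_j : k ≥ 1}` (the one-resonance condition with respect to `{λ₁,…,λ_m}`).
Then `λ_j ≠ λ_s` for every `j ∈ {1,…,m}` and every `s ∈ {1,…,n}` with `s ≠ j`.
(Indices are 0-based: `j < m` corresponds to the first `m` eigenvalues.) -/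
theorem one_resonant_eigenvalues_distinct
    (n m : ℕ) (hm : 1 ≤ m) (hmn : m ≤ n)
    (lam : Fin n → ℂ) (hlam : ∀ i, lam i ≠ 0)
    (α : Fin n → ℕ) (hα0 : α ≠ 0)
    (hαm : ∀ j : Fin n, m ≤ (j : ℕ) → α j = 0)
    (hres : ∀ j : Fin n, (j : ℕ) < m →
      ∀ l : Fin n → ℕ,
        (2 ≤ ∑ i, l i ∧ lam j = ∏ i, lam i ^ l i) ↔
          (∃ k : ℕ, 1 ≤ k ∧ l = fun i => k * α i + if i = j then 1 else 0)) :
    ∀ j s : Fin n, (j : ℕ) < m → s ≠ j → lam j ≠ lam s := by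
  intro j s hj hsj hjs
  have hprod : ∀ t : Fin n,
      (∏ i, lam i ^ (α i + if i = t then 1 else 0))
        = (∏ i, lam i ^ α i) * lam t := by
    intro t
    simp only [pow_add]
    rw [Finset.prod_mul_distrib]
    congr 1
    simp [apply_ite (lam _ ^ ·)]
  -- first: l = α + e_j is a resonance, giving λ^α = 1
  have h1 := (hres j hj (fun i => α i + if i = j then 1 else 0)).mpr
    ⟨1, le_refl 1, by funext i; simp⟩
  obtain ⟨hsum1, heq1⟩ := h1
  rw [hprod j] at heq1
  have hPone : (∏ i, lam i ^ α i) = 1 := by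
    have := hlam j
    field_simp at heq1
    tauto
  -- second: l = α + e_s is then also a resonance for j
  have h2 := (hres j hj (fun i => α i + if i = s then 1 else 0)).mp
    ⟨by simpa [Finset.sum_add_distrib] using hsum1,
     by rw [hprod s, hPone, one_mul]; exact hjs⟩
  obtain ⟨k, hk, hl⟩ := h2
  have hj' := congrFun hl j
  simp [hsj.symm ∘ Eq.symm, Ne.symm hsj] at hj'
  -- hj' : α j = k * α j + 1
  have : α j ≤ k * α j := Nat.le_mul_of_pos_left _ hk
  omega
end

section
/- Let λ ∈ ℂ with |λ| = 1 and let F(z,w) = (λz (1 − zw/λ)^{-1}, (w/λ)(1 − zw/λ)), a germ of holomorphic diffeomorphism of ℂ² at 0. Then F₁(z,w)·F₂(z,w) = zw for all (z,w) in a neighborhood of 0 where F is defined. Consequently, if (z,w) is such that all iterates F^{∘n}(z,w) are defined and F^{∘n}(z,w) → 0 as n → ∞, then zw = 0; in particular, F admits no basin of attraction at 0. -/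
open Filter

/-- `U` is a basin of attraction at `0` for the self-map `F` of `ℂ²`: a nonempty
(not necessarily connected) open set with `0` on its boundary, for which there is a
neighborhood basis `{Ω_j}` of `0` such that `F(U ∩ Ω_j) ⊆ U ∩ Ω_j` and all orbits of
points of `U ∩ Ω_j` converge to `0`. -/
def IsBasinAt2 (F : ℂ × ℂ → ℂ × ℂ) (U : Set (ℂ × ℂ)) : Prop :=
  U.Nonempty ∧ IsOpen U ∧ (0 : ℂ × ℂ) ∈ frontier U ∧
    ∃ Ω : ℕ → Set (ℂ × ℂ),
      (nhds (0 : ℂ × ℂ)).HasBasis (fun _ : ℕ => True) Ω ∧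
        ∀ i, F '' (U ∩ Ω i) ⊆ U ∩ Ω i ∧
          ∀ p ∈ U ∩ Ω i, Tendsto (fun m => F^[m] p) atTop (nhds 0)

/-- In any nonempty open subset of `ℂ²` there is a point with both coordinates nonzero. -/
lemma exists_mul_ne_zero_of_isOpen (V : Set (ℂ × ℂ)) (hV : IsOpen V) (p : ℂ × ℂ)
    (hp : p ∈ V) : ∃ q ∈ V, q.1 * q.2 ≠ 0 := by
  obtain ⟨ε, hε, hball⟩ := Metric.isOpen_iff.mp hV p hp
  set c : ℂ := ((ε / 2 : ℝ) : ℂ) with hc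
  have hcne : c ≠ 0 := by
    simp only [hc, Ne, Complex.ofReal_eq_zero]
    linarith
  have hcd : dist c (0 : ℂ) = ε / 2 := by
    rw [dist_zero_right, hc, Complex.norm_real, Real.norm_eq_abs, abs_of_pos (by linarith)]
  refine ⟨(if p.1 = 0 then c else p.1, if p.2 = 0 then c else p.2), hball ?_, ?_⟩
  · rw [Metric.mem_ball, Prod.dist_eq]
    have h1 : dist (if p.1 = 0 then c else p.1) p.1 < ε := by
      split_ifs with h
      · rw [h, hcd]; linarith
      · simpa using hε
    have h2 : dist (if p.2 = 0 then c else p.2) p.2 < ε := by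
      split_ifs with h
      · rw [h, hcd]; linarith
      · simpa using hε
    exact max_lt h1 h2
  · simp only [Ne, mul_eq_zero, not_or]
    constructor
    · split_ifs with h
      · exact hcne
      · exact h
    · split_ifs with h
      · exact hcne
      · exact h

/-- **A one-resonant degenerate germ with no basin of attraction (Subsection 6.4).**
Let `|λ| = 1` and `F(z,w) = (λz(1 - zw/λ)⁻¹, (w/λ)(1 - zw/λ))`.  Then
`F₁(z,w)·F₂(z,w) = zw` wherever `F` is defined; consequently, if all the iterates
`F^{∘n}(z,w)` are defined and converge to `0`, then `zw = 0`.  In particular `F`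
admits no basin of attraction at `0`. -/
theorem degenerate_example_no_basin
    (lam : ℂ) (hlam : ‖lam‖ = 1)
    (F : ℂ × ℂ → ℂ × ℂ)
    (hF : F = fun p : ℂ × ℂ =>
      (lam * p.1 * (1 - p.1 * p.2 / lam)⁻¹, p.2 / lam * (1 - p.1 * p.2 / lam))) :
    (∀ p : ℂ × ℂ, 1 - p.1 * p.2 / lam ≠ 0 → (F p).1 * (F p).2 = p.1 * p.2)
    ∧ (∀ p : ℂ × ℂ, (∀ n : ℕ, 1 - (F^[n] p).1 * (F^[n] p).2 / lam ≠ 0) →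
        Tendsto (fun n => F^[n] p) atTop (nhds 0) → p.1 * p.2 = 0)
    ∧ ¬ ∃ U : Set (ℂ × ℂ), IsBasinAt2 F U := by
  have hlam0 : lam ≠ 0 := by
    intro h
    rw [h] at hlam
    simp at hlam
  -- Part 1: the product is invariant where the map is defined.
  have h1 : ∀ p : ℂ × ℂ, 1 - p.1 * p.2 / lam ≠ 0 → (F p).1 * (F p).2 = p.1 * p.2 := by
    intro p hd
    rw [hF]
    simp only
    have hd' : (1 - p.1 * p.2 / lam)⁻¹ * (1 - p.1 * p.2 / lam) = 1 := inv_mul_cancel₀ hd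
    have hl' : lam * lam⁻¹ = 1 := mul_inv_cancel₀ hlam0
    calc lam * p.1 * (1 - p.1 * p.2 / lam)⁻¹ * (p.2 / lam * (1 - p.1 * p.2 / lam))
        = p.1 * p.2 * ((1 - p.1 * p.2 / lam)⁻¹ * (1 - p.1 * p.2 / lam)) * (lam * lam⁻¹) := by
          ring
      _ = p.1 * p.2 := by rw [hd', hl']; ring
  -- Invariance of the product along orbits with nonvanishing denominators.
  have horb : ∀ p : ℂ × ℂ, (∀ n : ℕ, 1 - (F^[n] p).1 * (F^[n] p).2 / lam ≠ 0) →
      ∀ n, (F^[n] p).1 * (F^[n] p).2 = p.1 * p.2 := by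
    intro p hd n
    induction n with
    | zero => simp
    | succ n ih => rw [Function.iterate_succ_apply', h1 _ (hd n), ih]
  -- Part 2.
  have h2 : ∀ p : ℂ × ℂ, (∀ n : ℕ, 1 - (F^[n] p).1 * (F^[n] p).2 / lam ≠ 0) →
      Tendsto (fun n => F^[n] p) atTop (nhds 0) → p.1 * p.2 = 0 := by
    intro p hd ht
    have hmul : Tendsto (fun n => (F^[n] p).1 * (F^[n] p).2) atTop
        (nhds ((0 : ℂ × ℂ).1 * (0 : ℂ × ℂ).2)) :=
      ((continuous_fst.tendsto (0 : ℂ × ℂ)).comp ht).mul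
        ((continuous_snd.tendsto (0 : ℂ × ℂ)).comp ht)
    have hconst : Tendsto (fun _ : ℕ => p.1 * p.2) atTop (nhds ((0:ℂ) * (0:ℂ))) :=
      (tendsto_congr (horb p hd)).mp (by simpa using hmul)
    simpa using tendsto_nhds_unique hconst tendsto_const_nhds
  refine ⟨h1, h2, ?_⟩
  rintro ⟨U, hUne, hUopen, hUfr, Ω, hB, hΩ⟩
  -- choose a basis element inside the ball of radius 1/2
  obtain ⟨i, -, hsub⟩ := hB.mem_iff.mp
    (Metric.ball_mem_nhds (0 : ℂ × ℂ) (by norm_num : (0:ℝ) < 1/2))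
  have hΩnhds : Ω i ∈ nhds (0 : ℂ × ℂ) := hB.mem_of_mem trivial
  have h0cl : (0 : ℂ × ℂ) ∈ closure U := frontier_subset_closure hUfr
  -- a point of U inside the interior of Ω i
  have hint : interior (Ω i) ∈ nhds (0 : ℂ × ℂ) := interior_mem_nhds.mpr hΩnhds
  obtain ⟨p0, hp0int, hp0U⟩ := mem_closure_iff_nhds.mp h0cl _ hint
  -- perturb to a point with nonzero product
  obtain ⟨q, hqV, hq0⟩ := exists_mul_ne_zero_of_isOpen (U ∩ interior (Ω i))
    (hUopen.inter isOpen_interior) p0 ⟨hp0U, hp0int⟩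
  have hqUΩ : q ∈ U ∩ Ω i := ⟨hqV.1, interior_subset hqV.2⟩
  -- the product of q is small
  have hqball : q ∈ Metric.ball (0 : ℂ × ℂ) (1/2) := hsub hqUΩ.2
  have hqnorm : ‖q‖ < 1/2 := by simpa using hqball
  have hsmall : ‖q.1 * q.2‖ < 1 := by
    rw [norm_mul]
    have h1' : ‖q.1‖ ≤ ‖q‖ := norm_fst_le q
    have h2' : ‖q.2‖ ≤ ‖q‖ := norm_snd_le q
    have hnn : (0:ℝ) ≤ ‖q‖ := norm_nonneg q
    have hmm : ‖q.1‖ * ‖q.2‖ ≤ ‖q‖ * ‖q‖ :=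
      mul_le_mul h1' h2' (norm_nonneg _) hnn
    nlinarith
  -- orbit stays in U ∩ Ω i and has constant product
  have hmain : ∀ n : ℕ, F^[n] q ∈ U ∩ Ω i ∧ (F^[n] q).1 * (F^[n] q).2 = q.1 * q.2 := by
    intro n
    induction n with
    | zero => exact ⟨hqUΩ, rfl⟩
    | succ n ih =>
      have hd : 1 - (F^[n] q).1 * (F^[n] q).2 / lam ≠ 0 := by
        rw [ih.2]
        intro h
        have : q.1 * q.2 = lam := by
          field_simp at h
          linear_combination -h
        rw [this, hlam] at hsmall
        linarith
      constructor
      · rw [Function.iterate_succ_apply']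
        exact (hΩ i).1 ⟨_, ih.1, rfl⟩
      · rw [Function.iterate_succ_apply', h1 _ hd, ih.2]
  have hdall : ∀ n : ℕ, 1 - (F^[n] q).1 * (F^[n] q).2 / lam ≠ 0 := by
    intro n
    rw [(hmain n).2]
    intro h
    have : q.1 * q.2 = lam := by
      field_simp at h
      linear_combination -h
    rw [this, hlam] at hsmall
    linarith
  have htend : Tendsto (fun m => F^[m] q) atTop (nhds 0) := (hΩ i).2 q hqUΩ
  exact hq0 (h2 q hdall htend)
end

section
/- Let λ ∈ ℂ with |λ| = 1, λ not a root of unity, and let F(z,w) = (z − z², λw + λzw), a germ of holomorphic diffeomorphism of ℂ² at 0. If (z₀,w₀) ∈ ℂ² is such that F^{∘n}(z₀,w₀) → 0 as n → ∞, then w₀ = 0. In particular, F (which is one-resonant with index of resonance (1,0) and non-degenerate with Λ(F) = −1, but not parabolically attracting) admits no basin of attraction at 0. -/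
open Filter

private lemma one_le_abs_one_add {ζ : ℂ} (h : 0 ≤ ζ.re) : 1 ≤ ‖1 + ζ‖ := by
  have h2 : 1 ≤ ‖1 + ζ‖ ^ 2 := by
    rw [Complex.sq_norm, Complex.normSq_apply]
    simp only [Complex.add_re, Complex.add_im, Complex.one_re, Complex.one_im]
    nlinarith [sq_nonneg ζ.im, sq_nonneg ζ.re]
  nlinarith [norm_nonneg (1 + ζ)]

/-- **A one-resonant non-degenerate, but not parabolically attracting, germ with no basin
of attraction (Subsection 6.5).**
Let `|λ| = 1`, `λ` not a root of unity, and `F(z,w) = (z - z², λw + λzw)`.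
If `F^{∘n}(z₀,w₀) → 0` as `n → ∞`, then `w₀ = 0`.  In particular `F` (which is
one-resonant with index of resonance `(1,0)` and non-degenerate with `Λ(F) = -1`,
but not parabolically attracting) admits no basin of attraction at `0`. -/
theorem nondegenerate_not_attracting_example_no_basin
    (lam : ℂ) (hlam : ‖lam‖ = 1)
    (hroot : ∀ q : ℕ, 1 ≤ q → lam ^ q ≠ 1)
    (F : ℂ × ℂ → ℂ × ℂ)
    (hF : F = fun p : ℂ × ℂ => (p.1 - p.1 ^ 2, lam * p.2 + lam * p.1 * p.2)) :
    (∀ p : ℂ × ℂ, Tendsto (fun n => F^[n] p) atTop (nhds 0) → p.2 = 0)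
    ∧ ¬ ∃ U : Set (ℂ × ℂ), IsBasinAt2 F U := by
  have hlam0 : lam ≠ 0 := by
    intro h; rw [h] at hlam; simp at hlam
  have main : ∀ p : ℂ × ℂ, Tendsto (fun n => F^[n] p) atTop (nhds 0) → p.2 = 0 := by
    intro p hp
    set z : ℕ → ℂ := fun n => (F^[n] p).1 with hzdef
    set w : ℕ → ℂ := fun n => (F^[n] p).2 with hwdef
    have hz : ∀ n, z (n + 1) = z n - z n ^ 2 := by
      intro n
      simp only [hzdef, Function.iterate_succ_apply', hF]
    have hw : ∀ n, w (n + 1) = lam * (1 + z n) * w n := by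
      intro n
      simp only [hwdef, hzdef, Function.iterate_succ_apply', hF]
      ring
    have hz0 : Tendsto z atTop (nhds 0) := by
      have := (continuous_fst.tendsto (0 : ℂ × ℂ)).comp hp
      exact this
    have hwabs0 : Tendsto (fun n => ‖w n‖) atTop (nhds 0) := by
      have h1 := (continuous_snd.tendsto (0 : ℂ × ℂ)).comp hp
      have h2 := (continuous_norm.tendsto (0 : ℂ)).comp h1
      rw [norm_zero] at h2
      exact h2
    -- 1 + z n is never zero along a convergent orbit
    have h1z : ∀ n, (1 : ℂ) + z n ≠ 0 := by
      intro l h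
      have hzl : z l = -1 := by linear_combination h
      have hge : ∀ k, 2 ≤ ‖z (l + 1 + k)‖ := by
        intro k
        induction k with
        | zero =>
          have : z (l + 1) = -2 := by rw [hz l, hzl]; ring
          simp [this]
        | succ k ih =>
          have e : l + 1 + (k + 1) = (l + 1 + k) + 1 := by ring
          rw [e, hz]
          set m := l + 1 + k
          have tri : ‖(z m) ^ 2‖ ≤ ‖z m - z m ^ 2‖ + ‖z m‖ := by
            calc ‖(z m) ^ 2‖
                = ‖(z m ^ 2 - z m) + z m‖ := by ring_nf
              _ ≤ ‖z m ^ 2 - z m‖ + ‖z m‖ :=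
                  norm_add_le _ _
              _ = ‖z m - z m ^ 2‖ + ‖z m‖ := by
                  rw [norm_sub_rev]
          have hsq : ‖(z m) ^ 2‖ = ‖z m‖ ^ 2 := norm_pow _ _
          nlinarith [ih]
      obtain ⟨N, hN⟩ := (Metric.tendsto_atTop.mp hz0) 2 (by norm_num)
      have hn := hN (max N (l + 1)) (le_max_left _ _)
      rw [Complex.dist_eq, sub_zero] at hn
      have hidx : l + 1 + (max N (l + 1) - (l + 1)) = max N (l + 1) := by omega
      have := hge (max N (l + 1) - (l + 1))
      rw [hidx] at this
      linarith
    -- if some w n = 0 then w 0 = 0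
    have hwz0 : ∀ n, w n = 0 → w 0 = 0 := by
      intro n
      induction n with
      | zero => exact fun h => h
      | succ n ih =>
        intro h
        rw [hw n] at h
        rcases mul_eq_zero.mp h with h' | h'
        · rcases mul_eq_zero.mp h' with h'' | h''
          · exact absurd h'' hlam0
          · exact absurd h'' (h1z n)
        · exact ih h'
    -- eventually Re (z n) ≥ 0
    have hre : ∀ᶠ n in atTop, 0 ≤ (z n).re := by
      by_cases hex : ∃ N, z N = 0
      · obtain ⟨N, hN⟩ := hex
        have hall : ∀ n, N ≤ n → z n = 0 := by
          intro n hn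
          induction n, hn using Nat.le_induction with
          | base => exact hN
          | succ n hn ih => rw [hz, ih]; ring
        filter_upwards [eventually_ge_atTop N] with n hn
        rw [hall n hn]
        simp
      · push_neg at hex
        obtain ⟨N, hN⟩ := (Metric.tendsto_atTop.mp hz0) (1 / 3) (by norm_num)
        have hsmall : ∀ n, N ≤ n → ‖z n‖ ≤ 1 / 3 := by
          intro n hn
          have := hN n hn
          rw [Complex.dist_eq, sub_zero] at this
          linarith
        set u : ℕ → ℂ := fun n => (z n)⁻¹ with hudef
        have hstep : ∀ n, N ≤ n → (u n).re + 1 / 2 ≤ (u (n + 1)).re := by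
          intro n hn
          have hzn : z n ≠ 0 := hex n
          have h1 : (1 : ℂ) - z n ≠ 0 := by
            intro h
            have hz1 : z n = 1 := by linear_combination -h
            have := hsmall n hn
            rw [hz1] at this
            simp at this
            linarith
          have hne : z n - z n ^ 2 ≠ 0 := by
            have := hex (n + 1)
            rwa [hz] at this
          have hiden : u (n + 1) = u n + 1 + z n / (1 - z n) := by
            show (z (n + 1))⁻¹ = (z n)⁻¹ + 1 + z n / (1 - z n)
            rw [hz]
            field_simp
            ring
          have hb : ‖z n / (1 - z n)‖ ≤ 1 / 2 := by
            rw [norm_div]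
            have h2 : (2 : ℝ) / 3 ≤ ‖1 - z n‖ := by
              have tri : ‖(1 : ℂ)‖ ≤ ‖1 - z n‖ + ‖z n‖ := by
                calc ‖(1 : ℂ)‖ = ‖(1 - z n) + z n‖ := by ring_nf
                  _ ≤ _ := norm_add_le _ _
              simp at tri
              have := hsmall n hn
              linarith
            rw [div_le_iff₀ (by linarith)]
            have := hsmall n hn
            linarith
          have hrb := Complex.abs_re_le_norm (z n / (1 - z n))
          have := (abs_le.mp (le_trans hrb hb)).1
          rw [hiden]
          simp only [Complex.add_re, Complex.one_re]
          linarith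
        have hgrow : ∀ n, N ≤ n → (u N).re + ((n : ℝ) - N) / 2 ≤ (u n).re := by
          intro n hn
          induction n, hn using Nat.le_induction with
          | base => simp
          | succ n hn ih =>
            have := hstep n hn
            push_cast
            linarith
        obtain ⟨M, hM⟩ := exists_nat_ge ((N : ℝ) + 2 * |(u N).re| + 2)
        filter_upwards [eventually_ge_atTop (max N M)] with n hn
        have hnN : N ≤ n := le_trans (le_max_left _ _) hn
        have hnM : (M : ℝ) ≤ (n : ℝ) := by
          exact_mod_cast le_trans (le_max_right _ _) hn
        have hpos : 0 < (u n).re := by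
          have h := hgrow n hnN
          have habs : -(u N).re ≤ |(u N).re| := neg_le_abs _
          linarith
        have hzu : z n = (u n)⁻¹ := (inv_inv (z n)).symm
        rw [hzu, Complex.inv_re]
        exact div_nonneg (le_of_lt hpos) (Complex.normSq_nonneg _)
    obtain ⟨N, hN⟩ := eventually_atTop.mp hre
    have hmono : ∀ n, N ≤ n → ‖w N‖ ≤ ‖w n‖ := by
      intro n hn
      induction n, hn using Nat.le_induction with
      | base => exact le_refl _
      | succ n hn ih =>
        rw [hw n, norm_mul, norm_mul, hlam, one_mul]
        have h1 := one_le_abs_one_add (hN n hn)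
        nlinarith [norm_nonneg (w n)]
    have hWN : ‖w N‖ ≤ 0 :=
      ge_of_tendsto hwabs0 (eventually_atTop.mpr ⟨N, hmono⟩)
    have hWN0 : w N = 0 := by
      have := norm_nonneg (w N)
      have h0 : ‖w N‖ = 0 := le_antisymm hWN this
      exact norm_eq_zero.mp h0
    have := hwz0 N hWN0
    simpa [hwdef] using this
  refine ⟨main, ?_⟩
  rintro ⟨U, hUne, hUopen, hUfr, Ω, hbasis, hΩ⟩
  have hΩ0 : Ω 0 ∈ nhds (0 : ℂ × ℂ) := hbasis.mem_of_mem trivial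
  obtain ⟨V, hVΩ, hVopen, hV0⟩ := mem_nhds_iff.mp hΩ0
  have h0cl : (0 : ℂ × ℂ) ∈ closure U := frontier_subset_closure hUfr
  obtain ⟨q, hqV, hqU⟩ := mem_closure_iff.mp h0cl V hVopen hV0
  have hsub : ∀ x ∈ U ∩ Ω 0, x.2 = 0 := fun x hx => main x ((hΩ 0).2 x hx)
  have hopen : IsOpen (U ∩ V) := hUopen.inter hVopen
  obtain ⟨ε, hε, hball⟩ := Metric.isOpen_iff.mp hopen q ⟨hqU, hqV⟩
  set q' : ℂ × ℂ := (q.1, q.2 + (ε / 2 : ℝ)) with hq'def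
  have hq'ball : q' ∈ Metric.ball q ε := by
    rw [Metric.mem_ball, Prod.dist_eq]
    simp only [hq'def, Complex.dist_eq]
    simp
    rw [abs_of_pos hε]
    constructor <;> linarith
  have hq' : q' ∈ U ∩ V := hball hq'ball
  have h1 : q'.2 = 0 := hsub q' ⟨hq'.1, hVΩ hq'.2⟩
  have h2 : q.2 = 0 := hsub q ⟨hqU, hVΩ hqV⟩
  rw [hq'def] at h1
  simp only [h2, zero_add] at h1
  have : (ε / 2 : ℝ) = 0 := by exact_mod_cast h1
  linarith
end
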